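/- arXiv:1407.5206 — 5 statements merged into one kernel-verified Lean document; each statement's English description precedes it below -/
import Mathlib

section
/- Let R be a ring, M an R-module, Γ = End(M)^op, F = Hom(M,-) and G = M ⊗_Γ -. If N is an R-module such that both N and Ω_M(N) (the kernel of a right M-approximation M' → N) are generated by M, then the counit μ_N : M ⊗_Γ Hom(M,N) → N is an isomorphism (i.e. N is M-static). -/
open TensorProduct LinearMap

section StaticDefs
variable (R : Type) [Ring R] (M : Type) [AddCommGroup M] [Module R M]
variable (N : Type) [AddCommGroup N] [Module R N]

/-- The evaluation map `M ⊗[ℤ] Hom_R(M,N) → N`. -/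
noncomputable def evalTensor : (M ⊗[ℤ] (M →ₗ[R] N)) →ₗ[ℤ] N :=
  TensorProduct.lift (LinearMap.mk₂ ℤ (fun m f => f m)
    (fun m m' f => by simp) (fun z m f => by simp)
    (fun m f g => rfl) (fun z m f => rfl))

/-- The subgroup of relations defining `M ⊗_{End(M)ᵒᵖ} Hom(M,N)` as a quotient
of `M ⊗[ℤ] Hom(M,N)`. -/
noncomputable def staticRel : AddSubgroup (M ⊗[ℤ] (M →ₗ[R] N)) :=
  AddSubgroup.closure {x | ∃ (e : M →ₗ[R] M) (m : M) (f : M →ₗ[R] N),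
    x = e m ⊗ₜ[ℤ] f - m ⊗ₜ[ℤ] (f ∘ₗ e)}

/-- `N` is `M`-static: the canonical map `μ_N : M ⊗_{End(M)ᵒᵖ} Hom(M,N) → N`
is an isomorphism; equivalently (since the relations are contained in the kernel of
evaluation), the evaluation map is surjective and its kernel consists of relations. -/
def IsStatic : Prop :=
  Function.Surjective (evalTensor R M N) ∧
    ∀ x, evalTensor R M N x = 0 → x ∈ staticRel R M N

/-- `M'` belongs to `add M`: it is a direct summand of a finite direct sum of copies of `M`. -/
def InAdd (M' : Type) [AddCommGroup M'] [Module R M'] : Prop :=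
  ∃ (n : ℕ) (i : M' →ₗ[R] (Fin n → M)) (p : (Fin n → M) →ₗ[R] M'),
    p ∘ₗ i = LinearMap.id

/-- `N` is generated by `M`: an epimorphic image of a finite direct sum of copies of `M`. -/
def GeneratedBy : Prop :=
  ∃ (n : ℕ) (g : (Fin n → M) →ₗ[R] N), Function.Surjective g

end StaticDefs

section Aux

variable (R : Type) [Ring R] (M : Type) [AddCommGroup M] [Module R M]
variable {N : Type} [AddCommGroup N] [Module R N]

@[simp] lemma evalTensor_tmul (m : M) (f : M →ₗ[R] N) :
    evalTensor R M N (m ⊗ₜ[ℤ] f) = f m := rfl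

lemma genMem (e : M →ₗ[R] M) (m : M) (f : M →ₗ[R] N) :
    e m ⊗ₜ[ℤ] f - m ⊗ₜ[ℤ] (f ∘ₗ e) ∈ staticRel R M N :=
  AddSubgroup.subset_closure ⟨e, m, f, rfl⟩

lemma eval_sum_tmul {n : ℕ} (g : (Fin n → M) →ₗ[R] N) (v : Fin n → M) :
    evalTensor R M N (∑ j, v j ⊗ₜ[ℤ] (g ∘ₗ LinearMap.single R (fun _ : Fin n => M) j))
      = g v := by
  rw [map_sum]
  simp only [evalTensor_tmul, LinearMap.comp_apply, LinearMap.single_apply]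
  rw [← map_sum, Finset.univ_sum_single]

/-- Key lemma: if `M'` is in `add M`, then the kernel of evaluation consists of
relations. -/
lemma ker_eval_subset_rel {M' : Type} [AddCommGroup M'] [Module R M']
    (hM' : InAdd R M M') :
    ∀ y, evalTensor R M M' y = 0 → y ∈ staticRel R M M' := by
  obtain ⟨n, i, p, hpi⟩ := hM'
  set h : Fin n → (M →ₗ[R] M') :=
    fun j => p ∘ₗ LinearMap.single R (fun _ : Fin n => M) j with hh
  -- correction term, as a function of the evaluation
  set L : M' → M ⊗[ℤ] (M →ₗ[R] M') :=
    fun w => ∑ j, (i w) j ⊗ₜ[ℤ] h j with hL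
  have hLadd : ∀ w w', L (w + w') = L w + L w' := by
    intro w w'
    simp only [hL, map_add, Pi.add_apply, TensorProduct.add_tmul,
      Finset.sum_add_distrib]
  have hL0 : L 0 = 0 := by
    simp [hL]
  have key : ∀ y : M ⊗[ℤ] (M →ₗ[R] M'),
      y - L (evalTensor R M M' y) ∈ staticRel R M M' := by
    intro y
    induction y using TensorProduct.induction_on with
    | zero => simpa [hL0] using (staticRel R M M').zero_mem
    | tmul m f =>
        set ej : Fin n → (M →ₗ[R] M) :=
          fun j => (LinearMap.proj j : (Fin n → M) →ₗ[R] M) ∘ₗ i ∘ₗ f with hej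
        have hf : f = ∑ j, (h j) ∘ₗ ej j := by
          ext x
          simp only [LinearMap.sum_apply, LinearMap.comp_apply, hh, hej,
            LinearMap.proj_apply, LinearMap.single_apply]
          rw [← map_sum, Finset.univ_sum_single]
          have := congrArg (fun φ => φ (f x)) hpi
          simpa using this.symm
        have heq : m ⊗ₜ[ℤ] f - L (f m)
            = ∑ j, (m ⊗ₜ[ℤ] (h j ∘ₗ ej j) - (ej j) m ⊗ₜ[ℤ] h j) := by
          rw [Finset.sum_sub_distrib, ← TensorProduct.tmul_sum, ← hf, hL]
          simp [hej]
        rw [evalTensor_tmul, heq]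
        refine AddSubgroup.sum_mem _ (fun j _ => ?_)
        have := (staticRel R M M').neg_mem (genMem R M (ej j) m (h j))
        rwa [neg_sub] at this
    | add y z hy hz =>
        have : (y + z) - L (evalTensor R M M' (y + z))
            = (y - L (evalTensor R M M' y)) + (z - L (evalTensor R M M' z)) := by
          rw [map_add, hLadd]; abel
        rw [this]
        exact (staticRel R M M').add_mem hy hz
  intro y hy
  have := key y
  rwa [hy, hL0, sub_zero] at this

end Aux

section Aux2

variable (R : Type) [Ring R] (M : Type) [AddCommGroup M] [Module R M]
variable {M' N : Type} [AddCommGroup M'] [Module R M'] [AddCommGroup N] [Module R N]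

/-- Post-composition with `q` on the second tensor factor. -/
noncomputable def compTensor (q : M' →ₗ[R] N) :
    M ⊗[ℤ] (M →ₗ[R] M') →ₗ[ℤ] M ⊗[ℤ] (M →ₗ[R] N) :=
  LinearMap.lTensor M
    { toFun := fun f => q ∘ₗ f
      map_add' := fun a b => by ext x; simp
      map_smul' := fun z a => by ext x; simp }

@[simp] lemma compTensor_tmul (q : M' →ₗ[R] N) (m : M) (f : M →ₗ[R] M') :
    compTensor R M q (m ⊗ₜ[ℤ] f) = m ⊗ₜ[ℤ] (q ∘ₗ f) := rfl

lemma compTensor_surj (q : M' →ₗ[R] N)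
    (happrox : ∀ g : M →ₗ[R] N, ∃ g' : M →ₗ[R] M', q ∘ₗ g' = g) :
    Function.Surjective (compTensor R M q) := by
  intro x
  induction x using TensorProduct.induction_on with
  | zero => exact ⟨0, map_zero _⟩
  | tmul m f =>
      obtain ⟨f', hf'⟩ := happrox f
      exact ⟨m ⊗ₜ[ℤ] f', by rw [compTensor_tmul, hf']⟩
  | add y z hy hz =>
      obtain ⟨a, ha⟩ := hy
      obtain ⟨b, hb⟩ := hz
      exact ⟨a + b, by rw [map_add, ha, hb]⟩

lemma eval_compTensor (q : M' →ₗ[R] N) (y : M ⊗[ℤ] (M →ₗ[R] M')) :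
    evalTensor R M N (compTensor R M q y) = q (evalTensor R M M' y) := by
  induction y using TensorProduct.induction_on with
  | zero => simp
  | tmul m f => simp
  | add y z hy hz => rw [map_add, map_add, map_add, map_add, hy, hz]

lemma compTensor_rel (q : M' →ₗ[R] N) {x : M ⊗[ℤ] (M →ₗ[R] M')}
    (hx : x ∈ staticRel R M M') : compTensor R M q x ∈ staticRel R M N := by
  have hle : staticRel R M M'
      ≤ (staticRel R M N).comap (compTensor R M q).toAddMonoidHom := by
    refine (AddSubgroup.closure_le _).mpr ?_
    rintro x ⟨e, m, f, rfl⟩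
    simp only [AddSubgroup.coe_comap, Set.mem_preimage, LinearMap.toAddMonoidHom_coe,
      SetLike.mem_coe, map_sub, compTensor_tmul]
    have : q ∘ₗ (f ∘ₗ e) = (q ∘ₗ f) ∘ₗ e := by rw [LinearMap.comp_assoc]
    rw [this]
    exact genMem R M e m (q ∘ₗ f)
  exact hle hx

end Aux2

/-- If `N` and the kernel `Ω_M(N)` of a right `M`-approximation
`q : M' → N` are both generated by `M`, then `N` is `M`-static. -/
theorem static_of_generated_of_omega_generated
    (R : Type) [Ring R] (M M' N : Type)
    [AddCommGroup M] [Module R M] [AddCommGroup M'] [Module R M']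
    [AddCommGroup N] [Module R N]
    (q : M' →ₗ[R] N)
    (hM' : InAdd R M M')
    (happrox : ∀ g : M →ₗ[R] N, ∃ g' : M →ₗ[R] M', q ∘ₗ g' = g)
    (hNgen : GeneratedBy R M N)
    (hΩgen : ∃ (n : ℕ) (g : (Fin n → M) →ₗ[R] M'),
      LinearMap.range g = LinearMap.ker q) :
    IsStatic R M N := by
  constructor
  · intro b
    obtain ⟨n, g, hg⟩ := hNgen
    obtain ⟨v, rfl⟩ := hg b
    exact ⟨_, eval_sum_tmul R M g v⟩
  · intro x hx
    obtain ⟨y, rfl⟩ := compTensor_surj R M q happrox x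
    have h1 : q (evalTensor R M M' y) = 0 := by
      rw [← eval_compTensor]; exact hx
    obtain ⟨k, g, hgker⟩ := hΩgen
    have hmem : evalTensor R M M' y ∈ LinearMap.range g := by
      rw [hgker]; exact LinearMap.mem_ker.mpr h1
    obtain ⟨v, hv⟩ := hmem
    set z : M ⊗[ℤ] (M →ₗ[R] M') :=
      ∑ j, v j ⊗ₜ[ℤ] (g ∘ₗ LinearMap.single R (fun _ : Fin k => M) j) with hzdef
    have hz : evalTensor R M M' z = g v := eval_sum_tmul R M g v
    have hyz : y - z ∈ staticRel R M M' :=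
      ker_eval_subset_rel R M hM' _ (by rw [map_sub, hz, hv, sub_self])
    have hQz : compTensor R M q z = 0 := by
      have hqg : ∀ j, q ∘ₗ (g ∘ₗ LinearMap.single R (fun _ : Fin k => M) j) = 0 := by
        intro j
        ext w
        have : g (Pi.single j w) ∈ LinearMap.ker q := by
          rw [← hgker]; exact LinearMap.mem_range_self g _
        simpa using this
      simp only [hzdef, map_sum, compTensor_tmul, hqg, TensorProduct.tmul_zero,
        Finset.sum_const_zero]
    have hfin := compTensor_rel R M q hyz
    rwa [map_sub, hQz, sub_zero] at hfin
end

section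
/- Let R be a ring, M an R-module, Γ = End(M)^op. For every finitely presented Γ-module X admitting a projective presentation P_1 → P_0 → X → 0 with P_0, P_1 finitely generated projective, if the image of the induced map M ⊗ P_1 → M ⊗ P_0 in mod R stays exact under Hom(M,-), then the unit ν_X : X → Hom(M, M ⊗_Γ X) is an isomorphism. -/
open TensorProduct LinearMap

section AdstaticDefs
variable (R : Type) [Ring R] (M : Type) [AddCommGroup M] [Module R M]

/-- The relations defining `M ⊗_{Γ(M)} X` as a quotient of `M ⊗[ℤ] X`,
where `Γ(M) = End_R(M)ᵒᵖ`. (The relation set is stable under the `R`-action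
on the left tensor factor, so the `R`-span agrees with the additive closure.) -/
noncomputable def adRel (X : Type) [AddCommGroup X]
    [Module (Module.End R M)ᵐᵒᵖ X] : Submodule R (M ⊗[ℤ] X) :=
  Submodule.span R {y | ∃ (e : Module.End R M) (m : M) (x : X),
    y = e m ⊗ₜ[ℤ] x - m ⊗ₜ[ℤ] ((MulOpposite.op e) • x)}

/-- `M ⊗_{Γ(M)} X`, realized as a quotient of `M ⊗[ℤ] X`, as an `R`-module. -/
noncomputable def TensorOver (X : Type) [AddCommGroup X]
    [Module (Module.End R M)ᵐᵒᵖ X] : Type :=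
  (M ⊗[ℤ] X) ⧸ adRel R M X

noncomputable instance (X : Type) [AddCommGroup X] [Module (Module.End R M)ᵐᵒᵖ X] :
    AddCommGroup (TensorOver R M X) :=
  inferInstanceAs (AddCommGroup ((M ⊗[ℤ] X) ⧸ adRel R M X))

noncomputable instance (X : Type) [AddCommGroup X] [Module (Module.End R M)ᵐᵒᵖ X] :
    Module R (TensorOver R M X) :=
  inferInstanceAs (Module R ((M ⊗[ℤ] X) ⧸ adRel R M X))

/-- The unit `ν_X : X → Hom_R(M, M ⊗_{Γ(M)} X)`, `x ↦ (m ↦ m ⊗ x)`. -/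
noncomputable def adUnit (X : Type) [AddCommGroup X]
    [Module (Module.End R M)ᵐᵒᵖ X] (x : X) : M →ₗ[R] TensorOver R M X where
  toFun := fun m => Submodule.Quotient.mk (m ⊗ₜ[ℤ] x)
  map_add' := by
    intro m m'
    show Submodule.Quotient.mk ((m + m') ⊗ₜ[ℤ] x) = _
    rw [TensorProduct.add_tmul]
    rfl
  map_smul' := by
    intro r m
    show Submodule.Quotient.mk ((r • m) ⊗ₜ[ℤ] x) = _
    rw [← TensorProduct.smul_tmul']
    rfl

/-- The induced `R`-linear map `M ⊗_{Γ(M)} X → M ⊗_{Γ(M)} Y` of a `Γ(M)`-linear map. -/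
noncomputable def tensorOverMap (X Y : Type) [AddCommGroup X]
    [Module (Module.End R M)ᵐᵒᵖ X] [AddCommGroup Y] [Module (Module.End R M)ᵐᵒᵖ Y]
    (φ : X →ₗ[(Module.End R M)ᵐᵒᵖ] Y) :
    TensorOver R M X →ₗ[R] TensorOver R M Y :=
  Submodule.mapQ (adRel R M X) (adRel R M Y)
    (TensorProduct.AlgebraTensorModule.map (LinearMap.id : M →ₗ[R] M)
      (φ.toAddMonoidHom.toIntLinearMap))
    (by
      refine Submodule.span_le.2 ?_
      rintro y ⟨e, m, x, rfl⟩
      simp only [SetLike.mem_coe, Submodule.mem_comap, map_sub,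
        TensorProduct.AlgebraTensorModule.map_tmul, LinearMap.id_apply,
        AddMonoidHom.coe_toIntLinearMap, LinearMap.toAddMonoidHom_coe]
      have : φ ((MulOpposite.op e) • x) = (MulOpposite.op e) • φ x := map_smul φ _ _
      rw [this]
      exact Submodule.subset_span ⟨e, m, φ x, rfl⟩)

end AdstaticDefs

section Aux

variable (R : Type) [Ring R] (M : Type) [AddCommGroup M] [Module R M]

local notation "Γ" => (Module.End R M)ᵐᵒᵖ

lemma adRel_mk_eq (X : Type) [AddCommGroup X] [Module Γ X]
    (e : Module.End R M) (m : M) (x : X) :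
    (Submodule.Quotient.mk (e m ⊗ₜ[ℤ] x) : TensorOver R M X) =
      Submodule.Quotient.mk (m ⊗ₜ[ℤ] ((MulOpposite.op e) • x)) := by
  rw [Submodule.Quotient.eq]
  exact Submodule.subset_span ⟨e, m, x, rfl⟩

lemma tensorOverMap_mk (X Y : Type) [AddCommGroup X] [Module Γ X]
    [AddCommGroup Y] [Module Γ Y] (φ : X →ₗ[Γ] Y) (m : M) (x : X) :
    tensorOverMap R M X Y φ (Submodule.Quotient.mk (m ⊗ₜ[ℤ] x)) =
      Submodule.Quotient.mk (m ⊗ₜ[ℤ] φ x) := by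
  rfl

lemma adUnit_apply (X : Type) [AddCommGroup X] [Module Γ X] (x : X) (m : M) :
    adUnit R M X x m = Submodule.Quotient.mk (m ⊗ₜ[ℤ] x) := rfl

lemma adUnit_nat (X Y : Type) [AddCommGroup X] [Module Γ X]
    [AddCommGroup Y] [Module Γ Y] (φ : X →ₗ[Γ] Y) (x : X) :
    (tensorOverMap R M X Y φ) ∘ₗ adUnit R M X x = adUnit R M Y (φ x) := by
  ext m
  simp only [LinearMap.comp_apply, adUnit_apply, tensorOverMap_mk]
  rfl

lemma adUnit_sub (X : Type) [AddCommGroup X] [Module Γ X] (x y : X) :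
    adUnit R M X (x - y) = adUnit R M X x - adUnit R M X y := by
  ext m
  simp only [adUnit_apply, LinearMap.sub_apply, TensorProduct.tmul_sub]
  rfl

/-- The map `M ⊗_Γ Γ → M`, `m ⊗ γ ↦ γ.unop m`. -/
noncomputable def adBeta : TensorOver R M Γ →ₗ[R] M :=
  Submodule.liftQ _
    (TensorProduct.AlgebraTensorModule.lift
      { toFun := fun m =>
          { toFun := fun γ : Γ => γ.unop m
            map_add' := fun a b => rfl
            map_smul' := fun n γ => by
              simp only [MulOpposite.unop_smul, eq_intCast, Int.cast_id]
              rfl }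
        map_add' := fun m m' => by ext γ; exact map_add γ.unop m m'
        map_smul' := fun r m => by ext γ; exact map_smul γ.unop r m })
    (by
      refine Submodule.span_le.2 ?_
      rintro y ⟨e, m, γ, rfl⟩
      simp only [SetLike.mem_coe, LinearMap.mem_ker, map_sub,
        TensorProduct.AlgebraTensorModule.lift_apply, TensorProduct.lift.tmul]
      show γ.unop (e m) - ((MulOpposite.op e) • γ).unop m = 0
      have : ((MulOpposite.op e) • γ).unop = γ.unop * e := by
        show (MulOpposite.op e * γ).unop = γ.unop * e
        simp
      rw [this]
      exact sub_eq_zero.mpr rfl)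

lemma adBeta_mk (m : M) (γ : Γ) :
    adBeta R M (Submodule.Quotient.mk (m ⊗ₜ[ℤ] γ)) = γ.unop m := rfl

/-- Dual basis for a finitely generated projective module. -/
lemma exists_dual_basis (P : Type) [AddCommGroup P] [Module Γ P]
    [Module.Projective Γ P] [Module.Finite Γ P] :
    ∃ (n : ℕ) (x : Fin n → P) (f : Fin n → (P →ₗ[Γ] Γ)),
      ∀ p : P, ∑ i, (f i p) • x i = p := by
  obtain ⟨n, v, hv⟩ := Module.Finite.exists_fin (R := Γ) (M := P)
  set π : (Fin n →₀ Γ) →ₗ[Γ] P := Finsupp.linearCombination Γ v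
  have hπ : Function.Surjective π := by
    rw [← LinearMap.range_eq_top, Finsupp.range_linearCombination, hv]
  obtain ⟨s, hs⟩ := Module.projective_lifting_property π (.id : P →ₗ[Γ] P) hπ
  refine ⟨n, v, fun i => (Finsupp.lapply i) ∘ₗ s, fun p => ?_⟩
  have h1 : π (s p) = p := congrArg (fun g => g p) hs
  calc ∑ i, ((Finsupp.lapply i ∘ₗ s) p) • v i
      = (s p).sum fun i γ => γ • v i := by
        rw [Finsupp.sum_fintype]
        · rfl
        · intro i; exact zero_smul Γ (v i)
    _ = π (s p) := rfl
    _ = p := h1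

/-- The unit is bijective for finitely generated projective modules. -/
lemma adstatic_of_projective (P : Type) [AddCommGroup P] [Module Γ P]
    [Module.Projective Γ P] [Module.Finite Γ P] :
    Function.Bijective (adUnit R M P) := by
  obtain ⟨n, x, f, hdb⟩ := exists_dual_basis R M P
  set T : Fin n → (TensorOver R M P →ₗ[R] TensorOver R M Γ) :=
    fun i => tensorOverMap R M P Γ (f i) with hT
  -- key identity
  have key : ∀ t : TensorOver R M P,
      ∑ i, adUnit R M P (x i) (adBeta R M (T i t)) = t := by
    intro t
    obtain ⟨s, rfl⟩ := Submodule.Quotient.mk_surjective _ t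
    induction s using TensorProduct.induction_on with
    | zero =>
      rw [show (Submodule.Quotient.mk 0 : TensorOver R M P) = (0 : TensorOver R M P) from rfl]
      simp only [Submodule.Quotient.mk_zero, map_zero, Finset.sum_const_zero]
    | tmul m p =>
      have step : ∀ i, adUnit R M P (x i)
          (adBeta R M (T i (Submodule.Quotient.mk (m ⊗ₜ[ℤ] p)))) =
            Submodule.Quotient.mk (m ⊗ₜ[ℤ] ((f i p) • x i)) := by
        intro i
        rw [hT]
        rw [tensorOverMap_mk, adBeta_mk, adUnit_apply, adRel_mk_eq,
          MulOpposite.op_unop]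
      rw [Finset.sum_congr rfl fun i _ => step i]
      have : (Submodule.Quotient.mk (m ⊗ₜ[ℤ] p) : TensorOver R M P) =
          Submodule.Quotient.mk (m ⊗ₜ[ℤ] (∑ i, (f i p) • x i)) := by
        rw [hdb]
      rw [this, TensorProduct.tmul_sum, ← Submodule.mkQ_apply, map_sum]
      rfl
    | add a b ha hb =>
      have hadd : ∀ u v : TensorOver R M P,
          ∑ i, adUnit R M P (x i) (adBeta R M (T i (u + v))) =
            ∑ i, adUnit R M P (x i) (adBeta R M (T i u)) +
              ∑ i, adUnit R M P (x i) (adBeta R M (T i v)) := by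
        intro u v
        simp only [map_add, Finset.sum_add_distrib]
      exact (hadd (Submodule.Quotient.mk a) (Submodule.Quotient.mk b)).trans
        (by rw [ha, hb] <;> rfl)
  -- the inverse map
  set μ : (M →ₗ[R] TensorOver R M P) → P := fun h =>
    ∑ i, (MulOpposite.op ((adBeta R M) ∘ₗ (T i) ∘ₗ h : M →ₗ[R] M) : Γ) • x i with hμ
  have left : ∀ p : P, μ (adUnit R M P p) = p := by
    intro p
    rw [hμ]
    have : ∀ i, (MulOpposite.op ((adBeta R M) ∘ₗ (T i) ∘ₗ adUnit R M P p : M →ₗ[R] M) : Γ)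
        = f i p := by
      intro i
      rw [show (f i p : Γ) = MulOpposite.op (f i p).unop from (MulOpposite.op_unop _).symm]
      congr 1
    simp only [this]
    exact hdb p -- MARK
  have right : ∀ h : M →ₗ[R] TensorOver R M P, adUnit R M P (μ h) = h := by
    intro h
    ext m
    rw [adUnit_apply]
    have : (Submodule.Quotient.mk (m ⊗ₜ[ℤ] μ h) : TensorOver R M P)
        = ∑ i, adUnit R M P (x i) (adBeta R M (T i (h m))) := by
      rw [hμ, TensorProduct.tmul_sum, ← Submodule.mkQ_apply, map_sum]
      refine Finset.sum_congr rfl fun i _ => ?_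
      rw [Submodule.mkQ_apply, ← adRel_mk_eq]
      rfl
    rw [this, key (h m)]
  constructor
  · intro a b hab
    rw [← left a, ← left b, hab]
  · intro h
    exact ⟨μ h, right h⟩

end Aux

/-- Let `Γ = End_R(M)ᵒᵖ` and let `X` be a finitely presented
`Γ`-module with a presentation `P₁ → P₀ → X → 0` by finitely generated projective
`Γ`-modules. If the induced sequence `M ⊗_Γ P₁ → M ⊗_Γ P₀ → M ⊗_Γ X → 0` stays exact
under `Hom_R(M,-)`, then the unit `ν_X : X → Hom_R(M, M ⊗_Γ X)` is an isomorphism,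
i.e. `X` is `M`-adstatic. -/
theorem adstatic_of_hom_exact
    (R : Type) [Ring R] (M : Type) [AddCommGroup M] [Module R M]
    (P₁ P₀ X : Type)
    [AddCommGroup P₁] [Module (Module.End R M)ᵐᵒᵖ P₁]
    [AddCommGroup P₀] [Module (Module.End R M)ᵐᵒᵖ P₀]
    [AddCommGroup X] [Module (Module.End R M)ᵐᵒᵖ X]
    [Module.Projective (Module.End R M)ᵐᵒᵖ P₁]
    [Module.Projective (Module.End R M)ᵐᵒᵖ P₀]
    [Module.Finite (Module.End R M)ᵐᵒᵖ P₁]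
    [Module.Finite (Module.End R M)ᵐᵒᵖ P₀]
    (p : P₁ →ₗ[(Module.End R M)ᵐᵒᵖ] P₀) (q : P₀ →ₗ[(Module.End R M)ᵐᵒᵖ] X)
    (hq : Function.Surjective q)
    (hex : LinearMap.range p = LinearMap.ker q)
    (hHomSurj : ∀ h : M →ₗ[R] TensorOver R M X,
      ∃ h₀ : M →ₗ[R] TensorOver R M P₀, (tensorOverMap R M P₀ X q) ∘ₗ h₀ = h)
    (hHomExact : ∀ h₀ : M →ₗ[R] TensorOver R M P₀,
      (tensorOverMap R M P₀ X q) ∘ₗ h₀ = 0 →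
        ∃ h₁ : M →ₗ[R] TensorOver R M P₁, (tensorOverMap R M P₁ P₀ p) ∘ₗ h₁ = h₀) :
    Function.Bijective (adUnit R M X) := by
  obtain ⟨inj₀, surj₀⟩ := adstatic_of_projective R M P₀
  obtain ⟨inj₁, surj₁⟩ := adstatic_of_projective R M P₁
  constructor
  · -- injectivity
    intro x₁ x₂ hx
    have hx0 : adUnit R M X (x₁ - x₂) = 0 := by
      rw [adUnit_sub, hx, sub_self]
    rw [← sub_eq_zero]
    obtain ⟨y₀, hy₀⟩ := hq (x₁ - x₂)
    have h1 : (tensorOverMap R M P₀ X q) ∘ₗ adUnit R M P₀ y₀ = 0 := by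
      rw [adUnit_nat, hy₀, hx0]
    obtain ⟨h₁, hh₁⟩ := hHomExact _ h1
    obtain ⟨y₁, rfl⟩ := surj₁ h₁
    rw [adUnit_nat] at hh₁
    have h2 : p y₁ = y₀ := inj₀ hh₁
    have h3 : y₀ ∈ LinearMap.ker q := by
      rw [← hex]; exact ⟨y₁, h2⟩
    rw [← hy₀, LinearMap.mem_ker.mp h3]
  · -- surjectivity
    intro h
    obtain ⟨h₀, hh₀⟩ := hHomSurj h
    obtain ⟨y₀, rfl⟩ := surj₀ h₀
    exact ⟨q y₀, by rw [← adUnit_nat, hh₀]⟩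
end

section
/- If M is a module over a finite-dimensional algebra Λ whose endomorphism ring is a division ring (a brick), then ab(M) = add M; more generally, if M is a finite direct sum of pairwise orthogonal bricks (Hom between distinct summands is zero), then the smallest exact abelian subcategory of mod Λ containing M equals add M, and add M is an abelian (semisimple) category. -/
open CategoryTheory Limits

instance (priority := 100) abelian_hasFiniteBiproducts {C : Type*} [CategoryTheory.Category C] [CategoryTheory.Abelian C] :
    CategoryTheory.Limits.HasFiniteBiproducts C :=
  CategoryTheory.Limits.HasFiniteBiproducts.of_hasFiniteProducts

section CatDefs
variable {C : Type*} [Category C] [Abelian C]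

/-- `X` belongs to `add M`: it is a retract of a finite direct sum of copies of `M`. -/
def CatInAdd (M X : C) : Prop :=
  ∃ (n : ℕ) (s : X ⟶ ⨁ (fun _ : Fin n => M)) (r : (⨁ (fun _ : Fin n => M)) ⟶ X),
    s ≫ r = 𝟙 X

/-- A (strictly full) exact abelian subcategory of an abelian category:
a class of objects closed under isomorphisms, containing the zero objects and
closed under kernels, cokernels and finite direct sums. -/
structure IsExactAbelianSub (P : C → Prop) : Prop where
  iso : ∀ {X Y : C}, (X ≅ Y) → P X → P Y
  zero : ∀ Z : C, IsZero Z → P Z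
  ker : ∀ {X Y : C} (f : X ⟶ Y), P X → P Y → P (kernel f)
  coker : ∀ {X Y : C} (f : X ⟶ Y), P X → P Y → P (cokernel f)
  sum : ∀ {X Y : C}, P X → P Y → P (X ⊞ Y)

/-- `ab M`: the smallest exact abelian subcategory containing `M`. -/
def abSub (M : C) (X : C) : Prop :=
  ∀ P : C → Prop, IsExactAbelianSub P → P M → P X

/-- `G` is a projective object relative to the subcategory `P`. -/
def ProjIn (P : C → Prop) (G : C) : Prop :=
  P G ∧ ∀ (X Y : C), P X → P Y → ∀ (e : X ⟶ Y), Epi e →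
    ∀ f : G ⟶ Y, ∃ g : G ⟶ X, g ≫ e = f

/-- `M` is ab-projective: projective as an object of `ab M`. -/
def AbProjective (M : C) : Prop := ProjIn (abSub M) M

/-- relative simple objects of the subcategory `P`. -/
def RelSimple (P : C → Prop) (X : C) : Prop :=
  P X ∧ ¬ IsZero X ∧
    ∀ (Y : C) (i : Y ⟶ X), Mono i → P Y → IsZero Y ∨ IsIso i

/-- `X` has a filtration of length `n` inside the subcategory `P` whose
consecutive quotients satisfy `Q`. -/
def HasFiltration (P Q : C → Prop) (X : C) (n : ℕ) : Prop :=
  ∃ (F : Fin (n+1) → C) (g : ∀ i : Fin n, F i.castSucc ⟶ F i.succ),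
    IsZero (F 0) ∧ Nonempty (F (Fin.last n) ≅ X) ∧
    ∀ i : Fin n, Mono (g i) ∧ P (F i.castSucc) ∧ P (F i.succ) ∧ Q (cokernel (g i))

/-- relative semisimple objects: finite direct sums of relative simples. -/
def RelSemisimple (P : C → Prop) (X : C) : Prop :=
  ∃ (m : ℕ) (s : Fin m → C), (∀ i, RelSimple P (s i)) ∧ Nonempty (X ≅ ⨁ s)

end CatDefs

namespace AbEqAddAux
variable {C : Type*} [Category C] [Abelian C]

lemma isZero_biproduct_fin_zero (f : Fin 0 → C) : IsZero (⨁ f) := by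
  rw [IsZero.iff_id_eq_zero]
  apply biproduct.hom_ext'
  exact fun j => j.elim0

noncomputable def splitAt {a : ℕ} (f : Fin (a + 1) → C) (p : Fin (a + 1)) :
    (⨁ f) ≅ f p ⊞ ⨁ (fun j : Fin a => f (p.succAbove j)) where
  hom := biprod.lift (biproduct.π f p) (biproduct.lift fun j => biproduct.π f (p.succAbove j))
  inv := biprod.desc (biproduct.ι f p) (biproduct.desc fun j => biproduct.ι f (p.succAbove j))
  hom_inv_id := by
    rw [biprod.lift_desc, biproduct.lift_desc, ← biproduct.total, Fin.sum_univ_succAbove _ p]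
  inv_hom_id := by
    ext j
    all_goals simp [biproduct.ι_π, Fin.succAbove_ne, Fin.succAbove_right_injective.eq_iff]
    all_goals (intro h; exact absurd h.symm (Fin.succAbove_ne p j))

noncomputable def biprodZeroLeft {X Y : C} (hX : IsZero X) : X ⊞ Y ≅ Y where
  hom := biprod.snd
  inv := biprod.inr
  hom_inv_id := by
    apply biprod.hom_ext' <;> simp
    exact hX.eq_of_src _ _
  inv_hom_id := by simp

noncomputable def kernelBiprodMap {X₁ X₂ Y₁ Y₂ : C} (f : X₁ ⟶ Y₁) (g : X₂ ⟶ Y₂) [IsIso f] :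
    kernel (biprod.map f g) ≅ kernel g := by
  refine IsLimit.conePointUniqueUpToIso (limit.isLimit _)
    (KernelFork.IsLimit.ofι (kernel.ι g ≫ biprod.inr) (by simp) ?_ ?_ ?_)
  · intro W' t ht
    refine kernel.lift g (t ≫ biprod.snd) ?_
    have := ht =≫ biprod.snd
    simpa using this
  · intro W' t ht
    have h1 : t ≫ biprod.fst = 0 := by
      have := ht =≫ biprod.fst
      simp only [Category.assoc, biprod.map_fst, zero_comp] at this
      rw [← Category.assoc] at this
      exact zero_of_comp_mono f this
    calc kernel.lift g (t ≫ biprod.snd) _ ≫ kernel.ι g ≫ biprod.inr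
        = t ≫ biprod.snd ≫ biprod.inr := by rw [← Category.assoc, kernel.lift_ι, Category.assoc]
      _ = t := by
          conv_rhs => rw [← Category.comp_id t, ← biprod.total]
          rw [Preadditive.comp_add, ← Category.assoc t biprod.fst biprod.inl, h1, zero_comp,
            zero_add]
  · intro W' t ht m hm
    have hm2 : m ≫ kernel.ι g = t ≫ biprod.snd := by
      have := hm =≫ biprod.snd
      simpa using this
    rw [← cancel_mono (kernel.ι g), kernel.lift_ι]
    exact hm2

noncomputable def cokernelBiprodMap {X₁ X₂ Y₁ Y₂ : C} (f : X₁ ⟶ Y₁) (g : X₂ ⟶ Y₂) [IsIso f] :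
    cokernel (biprod.map f g) ≅ cokernel g := by
  refine IsColimit.coconePointUniqueUpToIso (colimit.isColimit _)
    (CokernelCofork.IsColimit.ofπ (biprod.snd ≫ cokernel.π g) (by simp) ?_ ?_ ?_)
  · intro Z' t ht
    refine cokernel.desc g (biprod.inr ≫ t) ?_
    have := biprod.inr ≫= ht
    simpa using this
  · intro Z' t ht
    have h1 : biprod.inl ≫ t = 0 := by
      have := biprod.inl ≫= ht
      simp only [biprod.inl_map_assoc, comp_zero] at this
      exact zero_of_epi_comp f this
    calc (biprod.snd ≫ cokernel.π g) ≫ cokernel.desc g (biprod.inr ≫ t) _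
        = biprod.snd ≫ biprod.inr ≫ t := by rw [Category.assoc, cokernel.π_desc]
      _ = t := by
          conv_rhs => rw [← Category.id_comp t, ← biprod.total]
          rw [Preadditive.add_comp, Category.assoc, h1, comp_zero, zero_add, Category.assoc]
          
  · intro Z' t ht m hm
    have hm2 : cokernel.π g ≫ m = biprod.inr ≫ t := by
      have := biprod.inr ≫= hm
      simpa using this
    rw [← cancel_epi (cokernel.π g), cokernel.π_desc]
    exact hm2

noncomputable def retractIsoKernel {X A : C} (s : X ⟶ A) (r : A ⟶ X) (h : s ≫ r = 𝟙 X) :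
    X ≅ kernel (𝟙 A - r ≫ s) where
  hom := kernel.lift _ s (by
    rw [Preadditive.comp_sub, Category.comp_id, ← Category.assoc, h, Category.id_comp, sub_self])
  inv := kernel.ι _ ≫ r
  hom_inv_id := by rw [← Category.assoc, kernel.lift_ι, h]
  inv_hom_id := by
    rw [← cancel_mono (kernel.ι (𝟙 A - r ≫ s)), Category.assoc, Category.assoc, kernel.lift_ι,
      Category.id_comp]
    have := kernel.condition (𝟙 A - r ≫ s)
    rw [Preadditive.comp_sub, Category.comp_id, sub_eq_zero] at this
    exact this.symm

noncomputable def kernelConj {A A' B B' : C} (α : A' ≅ A) (f : A ⟶ B) (β : B ≅ B') :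
    kernel (α.hom ≫ f ≫ β.hom) ≅ kernel f :=
  kernelIsIsoComp α.hom (f ≫ β.hom) ≪≫ kernelCompMono f β.hom

noncomputable def cokernelConj {A A' B B' : C} (α : A' ≅ A) (f : A ⟶ B) (β : B ≅ B') :
    cokernel (α.hom ≫ f ≫ β.hom) ≅ cokernel f :=
  cokernelEpiComp α.hom (f ≫ β.hom) ≪≫ cokernelCompIsIso f β.hom

section Bricks
variable {n : ℕ} (B : Fin n → C)

noncomputable def biproductCongr {m : ℕ} {f g : Fin m → C} (h : f = g) : (⨁ f) ≅ ⨁ g := by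
  subst h; exact Iso.refl _

lemma kerCoker (hB : ∀ (i j : Fin n) (g : B i ⟶ B j), g ≠ 0 → IsIso g) :
    ∀ (a : ℕ) (u : Fin a → Fin n) (b : ℕ) (v : Fin b → Fin n)
    (f : (⨁ fun j => B (u j)) ⟶ ⨁ fun j => B (v j)),
    (∃ (c : ℕ) (w : Fin c → Fin n), Nonempty (kernel f ≅ ⨁ fun j => B (w j))) ∧
    (∃ (c : ℕ) (w : Fin c → Fin n), Nonempty (cokernel f ≅ ⨁ fun j => B (w j))) := by
  intro a
  induction a with
  | zero =>
    intro u b v f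
    have hf : f = 0 := by
      apply biproduct.hom_ext'
      exact fun j => j.elim0
    exact ⟨⟨0, u, ⟨kernelIsoOfEq hf ≪≫ kernelZeroIsoSource⟩⟩,
      ⟨b, v, ⟨cokernelIsoOfEq hf ≪≫ cokernelZeroIsoTarget⟩⟩⟩
  | succ a ih =>
    intro u b v f
    by_cases hf : f = 0
    · exact ⟨⟨a + 1, u, ⟨kernelIsoOfEq hf ≪≫ kernelZeroIsoSource⟩⟩,
        ⟨b, v, ⟨cokernelIsoOfEq hf ≪≫ cokernelZeroIsoTarget⟩⟩⟩
    · have hex : ∃ p q,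
          biproduct.ι (fun j => B (u j)) p ≫ f ≫ biproduct.π (fun j => B (v j)) q ≠ 0 := by
        by_contra hc
        push_neg at hc
        refine hf ?_
        apply biproduct.hom_ext'
        intro p
        apply biproduct.hom_ext
        intro q
        simpa using hc p q
      obtain ⟨p, q, hpq⟩ := hex
      obtain _ | b' := b
      · exact q.elim0
      have h11 : biprod.inl ≫ ((splitAt (fun j => B (u j)) p).inv ≫ f ≫
            (splitAt (fun j => B (v j)) q).hom) ≫ biprod.fst
          = biproduct.ι (fun j => B (u j)) p ≫ f ≫ biproduct.π (fun j => B (v j)) q := by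
        simp [splitAt]
      haveI hi : IsIso (biprod.inl ≫ ((splitAt (fun j => B (u j)) p).inv ≫ f ≫
          (splitAt (fun j => B (v j)) q).hom) ≫ biprod.fst) := by
        rw [h11]; exact hB _ _ _ hpq
      obtain ⟨L, R, g, hg⟩ :=
        Biprod.gaussian ((splitAt (fun j => B (u j)) p).inv ≫ f ≫ (splitAt (fun j => B (v j)) q).hom)
      obtain ⟨⟨ck, wk, ⟨ik⟩⟩, ⟨cc, wc, ⟨ic⟩⟩⟩ :=
        ih (fun j => u (p.succAbove j)) b' (fun j => v (q.succAbove j)) g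
      constructor
      · exact ⟨ck, wk, ⟨(kernelConj (splitAt (fun j => B (u j)) p).symm f
            (splitAt (fun j => B (v j)) q)).symm ≪≫
          (kernelConj L _ R).symm ≪≫ kernelIsoOfEq hg ≪≫ kernelBiprodMap _ g ≪≫ ik⟩⟩
      · exact ⟨cc, wc, ⟨(cokernelConj (splitAt (fun j => B (u j)) p).symm f
            (splitAt (fun j => B (v j)) q)).symm ≪≫
          (cokernelConj L _ R).symm ≪≫ cokernelIsoOfEq hg ≪≫ cokernelBiprodMap _ g ≪≫ ic⟩⟩


lemma sumB_biprod : ∀ (c1 : ℕ) (w1 : Fin c1 → Fin n) (c2 : ℕ) (w2 : Fin c2 → Fin n),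
    ∃ (c3 : ℕ) (w3 : Fin c3 → Fin n),
      Nonempty (((⨁ fun j => B (w1 j)) ⊞ ⨁ fun j => B (w2 j)) ≅ ⨁ fun j => B (w3 j)) := by
  intro c1
  induction c1 with
  | zero =>
    intro w1 c2 w2
    exact ⟨c2, w2, ⟨biprodZeroLeft (isZero_biproduct_fin_zero _)⟩⟩
  | succ c ihc =>
    intro w1 c2 w2
    obtain ⟨c3, w3, ⟨i3⟩⟩ := ihc (fun j => w1 ((0 : Fin (c + 1)).succAbove j)) c2 w2
    let w4 : Fin (c3 + 1) → Fin n := Fin.cons (w1 0) w3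
    refine ⟨c3 + 1, w4, ⟨?_⟩⟩
    have e1 : B (w1 0) = B (w4 0) := by
      rw [show w4 0 = w1 0 from Fin.cons_zero _ _]
    have e2 : (fun j => B (w3 j)) = fun j => B (w4 ((0 : Fin (c3 + 1)).succAbove j)) := by
      funext j
      rw [show (0 : Fin (c3 + 1)).succAbove j = j.succ from Fin.zero_succAbove j,
        show w4 j.succ = w3 j from Fin.cons_succ _ _ _]
    exact (biprod.mapIso (splitAt (fun j => B (w1 j)) 0) (Iso.refl _)) ≪≫
      biprod.associator _ _ _ ≪≫ biprod.mapIso (Iso.refl _) i3 ≪≫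
      (biprod.mapIso (eqToIso e1) (biproductCongr e2)) ≪≫
      (splitAt (fun j => B (w4 j)) 0).symm

lemma sumB_pow : ∀ m : ℕ, ∃ (c : ℕ) (w : Fin c → Fin n),
    Nonempty ((⨁ fun _ : Fin m => ⨁ B) ≅ ⨁ fun j => B (w j)) := by
  intro m
  induction m with
  | zero =>
    exact ⟨0, Fin.elim0, ⟨(isZero_biproduct_fin_zero _).iso (isZero_biproduct_fin_zero _)⟩⟩
  | succ m ih =>
    obtain ⟨c, w, ⟨i⟩⟩ := ih
    obtain ⟨c3, w3, ⟨i3⟩⟩ := sumB_biprod B n id c w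
    exact ⟨c3, w3, ⟨splitAt (fun _ : Fin (m + 1) => ⨁ B) 0 ≪≫
      biprod.mapIso (Iso.refl _) i ≪≫ i3⟩⟩

lemma sumB_of_retract (hB : ∀ (i j : Fin n) (g : B i ⟶ B j), g ≠ 0 → IsIso g)
    {X : C} {c : ℕ} {w : Fin c → Fin n}
    (s : X ⟶ ⨁ fun j => B (w j)) (r : (⨁ fun j => B (w j)) ⟶ X) (h : s ≫ r = 𝟙 X) :
    ∃ (c' : ℕ) (w' : Fin c' → Fin n), Nonempty (X ≅ ⨁ fun j => B (w' j)) := by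
  obtain ⟨⟨ck, wk, ⟨ik⟩⟩, -⟩ := kerCoker B hB c w c w (𝟙 _ - r ≫ s)
  exact ⟨ck, wk, ⟨retractIsoKernel s r h ≪≫ ik⟩⟩

lemma catInAdd_iff_sumB (hB : ∀ (i j : Fin n) (g : B i ⟶ B j), g ≠ 0 → IsIso g) (X : C) :
    CatInAdd (⨁ B) X ↔
      ∃ (c : ℕ) (w : Fin c → Fin n), Nonempty (X ≅ ⨁ fun j => B (w j)) := by
  constructor
  · rintro ⟨m, s, r, h⟩
    obtain ⟨c, w, ⟨i⟩⟩ := sumB_pow B m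
    refine sumB_of_retract B hB (s ≫ i.hom) (i.inv ≫ r) ?_
    rw [Category.assoc, ← Category.assoc i.hom, i.hom_inv_id, Category.id_comp, h]
  · rintro ⟨c, w, ⟨i⟩⟩
    refine ⟨c, i.hom ≫ biproduct.map (fun j => biproduct.ι B (w j)),
      biproduct.map (fun j => biproduct.π B (w j)) ≫ i.inv, ?_⟩
    have hmap : biproduct.map (fun j => biproduct.ι B (w j)) ≫
        biproduct.map (fun j => biproduct.π B (w j)) = 𝟙 _ := by
      ext j
      simp
    rw [Category.assoc, ← Category.assoc (biproduct.map _), hmap, Category.id_comp,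
      i.hom_inv_id]

lemma isExactAbelianSub_catInAdd (hB : ∀ (i j : Fin n) (g : B i ⟶ B j), g ≠ 0 → IsIso g) :
    IsExactAbelianSub (CatInAdd (⨁ B)) := by
  constructor
  · intro X Y e hX
    rw [catInAdd_iff_sumB B hB] at hX ⊢
    obtain ⟨c, w, ⟨i⟩⟩ := hX
    exact ⟨c, w, ⟨e.symm ≪≫ i⟩⟩
  · intro Z hZ
    rw [catInAdd_iff_sumB B hB]
    exact ⟨0, Fin.elim0, ⟨hZ.iso (isZero_biproduct_fin_zero _)⟩⟩
  · intro X Y f hX hY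
    rw [catInAdd_iff_sumB B hB] at hX hY ⊢
    obtain ⟨c, w, ⟨i⟩⟩ := hX
    obtain ⟨c', w', ⟨i'⟩⟩ := hY
    obtain ⟨⟨ck, wk, ⟨ik⟩⟩, -⟩ := kerCoker B hB c w c' w' (i.inv ≫ f ≫ i'.hom)
    exact ⟨ck, wk, ⟨(kernelConj i.symm f i').symm ≪≫ ik⟩⟩
  · intro X Y f hX hY
    rw [catInAdd_iff_sumB B hB] at hX hY ⊢
    obtain ⟨c, w, ⟨i⟩⟩ := hX
    obtain ⟨c', w', ⟨i'⟩⟩ := hY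
    obtain ⟨-, ⟨cc, wc, ⟨ic⟩⟩⟩ := kerCoker B hB c w c' w' (i.inv ≫ f ≫ i'.hom)
    exact ⟨cc, wc, ⟨(cokernelConj i.symm f i').symm ≪≫ ic⟩⟩
  · intro X Y hX hY
    rw [catInAdd_iff_sumB B hB] at hX hY ⊢
    obtain ⟨c, w, ⟨i⟩⟩ := hX
    obtain ⟨c', w', ⟨i'⟩⟩ := hY
    obtain ⟨c3, w3, ⟨i3⟩⟩ := sumB_biprod B c w c' w'
    exact ⟨c3, w3, ⟨biprod.mapIso i i' ≪≫ i3⟩⟩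

lemma catInAdd_self : CatInAdd (⨁ B) (⨁ B) :=
  ⟨1, biproduct.lift fun _ => 𝟙 _, biproduct.desc fun _ => 𝟙 _, by
    simp [biproduct.lift_desc]⟩

lemma abSub_of_catInAdd {X : C} (h : CatInAdd (⨁ B) X) : abSub (⨁ B) X := by
  intro P hP hM
  obtain ⟨m, s, r, hsr⟩ := h
  have hpow : ∀ m : ℕ, P (⨁ fun _ : Fin m => ⨁ B) := by
    intro m
    induction m with
    | zero => exact hP.zero _ (isZero_biproduct_fin_zero _)
    | succ m ih =>
      exact hP.iso (splitAt (fun _ : Fin (m + 1) => ⨁ B) 0).symm (hP.sum hM ih)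
  exact hP.iso (retractIsoKernel s r hsr).symm (hP.ker _ (hpow m) (hpow m))

end Bricks

end AbEqAddAux


section Stmt9
open CategoryTheory Limits

/-- If `M = B₁ ⊕ ⋯ ⊕ Bₙ` is a finite direct sum of pairwise orthogonal
bricks over a finite-dimensional algebra `Λ` (every nonzero endomorphism of each `Bᵢ` is
invertible, and `Hom(Bᵢ, Bⱼ) = 0` for `i ≠ j`), then the smallest exact abelian
subcategory containing `M` is `add M`; in particular `add M` is an exact abelian
(semisimple) subcategory of `mod Λ`, every object of it being a finite direct sum
of copies of the bricks `Bᵢ`. -/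
theorem ab_eq_add_of_orthogonal_bricks
    (k : Type) [Field k] (Λ : Type) [Ring Λ] [Algebra k Λ] [FiniteDimensional k Λ]
    (n : ℕ) (B : Fin n → ModuleCat Λ)
    (hbrick : ∀ (i : Fin n) (f : B i ⟶ B i), f ≠ 0 → IsIso f)
    (horth : ∀ (i j : Fin n), i ≠ j → ∀ f : B i ⟶ B j, f = 0) :
    (∀ X : ModuleCat Λ, abSub (⨁ B) X ↔ CatInAdd (⨁ B) X) ∧
    IsExactAbelianSub (CatInAdd (⨁ B)) ∧
    (∀ X : ModuleCat Λ, CatInAdd (⨁ B) X →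
      ∃ (m : ℕ) (g : Fin m → ModuleCat Λ),
        (∀ j, ∃ i, Nonempty (g j ≅ B i)) ∧ Nonempty (X ≅ ⨁ g)) := by
  have hB : ∀ (i j : Fin n) (g : B i ⟶ B j), g ≠ 0 → IsIso g := by
    intro i j g hg
    by_cases hij : i = j
    · subst hij
      exact hbrick i g hg
    · exact absurd (horth i j hij g) hg
  refine ⟨fun X => ⟨fun h => h _ (AbEqAddAux.isExactAbelianSub_catInAdd B hB)
      (AbEqAddAux.catInAdd_self B), AbEqAddAux.abSub_of_catInAdd B⟩,
    AbEqAddAux.isExactAbelianSub_catInAdd B hB, ?_⟩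
  intro X hX
  rw [AbEqAddAux.catInAdd_iff_sumB B hB] at hX
  obtain ⟨c, w, ⟨i⟩⟩ := hX
  exact ⟨c, fun j => B (w j), fun j => ⟨w j, ⟨Iso.refl _⟩⟩, ⟨i⟩⟩


end Stmt9
end

section
/- Let Λ be a finite-dimensional algebra and M a faithful Λ-module such that ab(M) contains all simple Λ-modules. Then ab(M) = mod Λ. -/
open CategoryTheory Limits

section Stmt10
open CategoryTheory Limits

section Aux
universe v
variable {Λ : Type} [Ring Λ] (M : ModuleCat.{v} Λ)

lemma absub_isExact : IsExactAbelianSub (abSub M) where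
  iso e h := fun P hP hM => hP.iso e (h P hP hM)
  zero Z hZ := fun P hP _ => hP.zero Z hZ
  ker f hX hY := fun P hP hM => hP.ker f (hX P hP hM) (hY P hP hM)
  coker f hX hY := fun P hP hM => hP.coker f (hX P hP hM) (hY P hP hM)
  sum hX hY := fun P hP hM => hP.sum (hX P hP hM) (hY P hP hM)

lemma absub_self : abSub M M := fun _ _ hM => hM

lemma absub_congr {A B : Type v} [AddCommGroup A] [Module Λ A] [AddCommGroup B] [Module Λ B]
    (e : A ≃ₗ[Λ] B) (h : abSub M (ModuleCat.of Λ A)) : abSub M (ModuleCat.of Λ B) :=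
  (absub_isExact M).iso e.toModuleIso h

lemma absub_ker {A B : Type v} [AddCommGroup A] [Module Λ A] [AddCommGroup B] [Module Λ B]
    (f : A →ₗ[Λ] B) (hA : abSub M (ModuleCat.of Λ A)) (hB : abSub M (ModuleCat.of Λ B)) :
    abSub M (ModuleCat.of Λ (LinearMap.ker f)) := by
  have h := (absub_isExact M).ker (X := ModuleCat.of Λ A) (Y := ModuleCat.of Λ B)
    (ModuleCat.ofHom f) hA hB
  exact (absub_isExact M).iso (ModuleCat.kernelIsoKer _) h

lemma absub_quot {A : Type v} [AddCommGroup A] [Module Λ A] (N : Submodule Λ A)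
    (hA : abSub M (ModuleCat.of Λ A)) (hN : abSub M (ModuleCat.of Λ N)) :
    abSub M (ModuleCat.of Λ (A ⧸ N)) := by
  have h := (absub_isExact M).coker (X := ModuleCat.of Λ N) (Y := ModuleCat.of Λ A)
    (ModuleCat.ofHom N.subtype) hN hA
  have h2 := (absub_isExact M).iso (ModuleCat.cokernelIsoRangeQuotient _) h
  exact absub_congr M (Submodule.quotEquivOfEq _ _ (Submodule.range_subtype N)) h2

lemma absub_prod {A B : Type v} [AddCommGroup A] [Module Λ A] [AddCommGroup B] [Module Λ B]
    (hA : abSub M (ModuleCat.of Λ A)) (hB : abSub M (ModuleCat.of Λ B)) :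
    abSub M (ModuleCat.of Λ (A × B)) := by
  have h := (absub_isExact M).sum hA hB
  exact (absub_isExact M).iso (ModuleCat.biprodIsoProd _ _) h

lemma absub_pow {A : Type v} [AddCommGroup A] [Module Λ A] (hA : abSub M (ModuleCat.of Λ A)) :
    ∀ n : ℕ, abSub M (ModuleCat.of Λ (Fin n → A))
  | 0 => (absub_isExact M).zero _ (ModuleCat.isZero_of_subsingleton _)
  | (n+1) => by
      have e : (Fin (n+1) → A) ≃ₗ[Λ] (A × (Fin n → A)) :=
        { (Fin.consEquiv fun _ : Fin (n+1) => A).symm with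
          map_add' := fun _ _ => rfl
          map_smul' := fun _ _ => rfl }
      exact absub_congr M e.symm (absub_prod M hA (absub_pow hA n))

end Aux

section Sub
universe v
variable (k : Type) [Field k] {Λ : Type} [Ring Λ] [Algebra k Λ] [FiniteDimensional k Λ]
variable (M : ModuleCat.{v} Λ)

include k in
lemma absub_submodule
    (hsimples : ∀ S : ModuleCat.{v} Λ, IsSimpleModule Λ S → abSub M S)
    {A : Type v} [AddCommGroup A] [Module Λ A] [Module.Finite Λ A]
    (hA : abSub M (ModuleCat.of Λ A)) :
    ∀ X : Submodule Λ A, abSub M (ModuleCat.of Λ X) := by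
  haveI : IsArtinianRing Λ := isArtinian_of_tower k inferInstance
  haveI : IsNoetherianRing Λ := isNoetherian_of_tower k inferInstance
  have wf : WellFounded ((· > ·) : Submodule Λ A → Submodule Λ A → Prop) :=
    IsNoetherian.wf inferInstance
  intro X
  refine wf.induction (C := fun X : Submodule Λ A => abSub M (ModuleCat.of Λ X)) X ?_
  intro X IH
  by_cases hX : X = ⊤
  · subst hX
    exact absub_congr M Submodule.topEquiv.symm hA
  · haveI : Nontrivial (A ⧸ X) :=
      Submodule.Quotient.nontrivial_iff.mpr hX
    haveI : IsAtomic (Submodule Λ (A ⧸ X)) :=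
      isAtomic_of_orderBot_wellFounded_lt (IsWellFounded.wf)
    rcases eq_bot_or_exists_atom_le (⊤ : Submodule Λ (A ⧸ X)) with htop | ⟨S, hS, -⟩
    · exact absurd htop (by simpa using (bot_ne_top (α := Submodule Λ (A ⧸ X))).symm)
    · set Y := Submodule.comap X.mkQ S with hYdef
      have hle : X ≤ Y := by
        intro x hx
        simp only [hYdef, Submodule.mem_comap, Submodule.mkQ_apply]
        rw [Submodule.Quotient.mk_eq_zero X |>.mpr hx]
        exact S.zero_mem
      have hXY : X < Y := by
        refine lt_of_le_of_ne hle ?_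
        intro hEq
        apply hS.1
        rw [← Submodule.map_comap_eq_of_surjective (Submodule.mkQ_surjective X) S, ← hYdef,
          ← hEq, Submodule.eq_bot_iff]
        rintro z ⟨x, hx, rfl⟩
        exact (Submodule.Quotient.mk_eq_zero X).mpr hx
      have hY : abSub M (ModuleCat.of Λ Y) := IH Y hXY
      have hmem : ∀ y : Y, (X.mkQ.comp Y.subtype) y ∈ S := fun y => y.2
      set g : Y →ₗ[Λ] S := LinearMap.codRestrict S (X.mkQ.comp Y.subtype) hmem with hg
      have hker : LinearMap.ker g = Submodule.comap Y.subtype X := by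
        rw [hg, LinearMap.ker_codRestrict, LinearMap.ker_comp, Submodule.ker_mkQ]
      have hSsimple : IsSimpleModule Λ S := isSimpleModule_iff_isAtom.mpr hS
      have hSab : abSub M (ModuleCat.of Λ S) := hsimples (ModuleCat.of Λ S) hSsimple
      have h1 : abSub M (ModuleCat.of Λ (LinearMap.ker g)) := absub_ker M g hY hSab
      rw [hker] at h1
      exact absub_congr M (Submodule.comapSubtypeEquivOfLe hle) h1
end Sub

/-- Let `Λ` be a finite-dimensional algebra and `M` a faithful
finite-dimensional `Λ`-module such that `ab M` contains all simple `Λ`-modules.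
Then `ab M = mod Λ`, i.e. every finite-dimensional `Λ`-module belongs to `ab M`. -/
theorem ab_eq_mod_of_faithful_containing_simples
    (k : Type) [Field k] (Λ : Type) [Ring Λ] [Algebra k Λ] [FiniteDimensional k Λ]
    (M : ModuleCat Λ) (hfin : Module.Finite Λ M) (hfaithful : FaithfulSMul Λ M)
    (hsimples : ∀ S : ModuleCat Λ, IsSimpleModule Λ S → abSub M S) :
    ∀ X : ModuleCat Λ, Module.Finite Λ X → abSub M X := by
  haveI := hfin
  haveI := hfaithful
  letI : Module k M := Module.compHom M (algebraMap k Λ)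
  haveI : IsScalarTower k Λ M := ⟨fun r s x => by
    show (r • s) • x = algebraMap k Λ r • (s • x)
    rw [Algebra.smul_def, mul_smul]⟩
  haveI : Module.Finite k M := Module.Finite.trans Λ M
  obtain ⟨t, m, hm⟩ := Module.Finite.exists_fin (R := k) (M := M)
  have hM : abSub M (ModuleCat.of Λ M) :=
    (absub_isExact M).iso (Iso.refl M : M ≅ ModuleCat.of Λ M) (absub_self M)
  have hpowM : abSub M (ModuleCat.of Λ (Fin t → M)) := absub_pow M hM t
  let ι : ULift Λ →ₗ[Λ] (Fin t → M) :=
    (LinearMap.pi fun i => LinearMap.toSpanSingleton Λ M (m i)).comp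
      ULift.moduleEquiv.toLinearMap
  have hι : Function.Injective ι := by
    intro a b hab
    have hsm : ∀ i, a.down • m i = b.down • m i := fun i => congrFun hab i
    have hall : ∀ x : M, a.down • x = b.down • x := by
      have hsp : ∀ x ∈ Submodule.span k (Set.range m), a.down • x = b.down • x := by
        intro x hx
        induction hx using Submodule.span_induction with
        | mem x hxm => obtain ⟨i, rfl⟩ := hxm; exact hsm i
        | zero => simp
        | add x y _ _ hx hy => rw [smul_add, smul_add, hx, hy]
        | smul c x _ hx =>
            rw [← algebraMap_smul Λ c x, ← mul_smul, ← mul_smul,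
              ← Algebra.commutes c a.down, ← Algebra.commutes c b.down, mul_smul, mul_smul, hx]
      intro x
      exact hsp x (by rw [hm]; trivial)
    exact ULift.down_injective (eq_of_smul_eq_smul hall)
  have hrange : abSub M (ModuleCat.of Λ (LinearMap.range ι)) :=
    absub_submodule k M hsimples hpowM (LinearMap.range ι)
  have hΛ : abSub M (ModuleCat.of Λ (ULift Λ)) :=
    absub_congr M (LinearEquiv.ofInjective ι hι).symm hrange
  intro X hX
  haveI := hX
  obtain ⟨n, f, hf⟩ := Module.Finite.exists_fin' Λ X
  let e : (Fin n → ULift Λ) ≃ₗ[Λ] (Fin n → Λ) :=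
    LinearEquiv.piCongrRight fun _ => ULift.moduleEquiv
  let f' : (Fin n → ULift Λ) →ₗ[Λ] X := f.comp e.toLinearMap
  have hf' : Function.Surjective f' := hf.comp e.surjective
  have hpow : abSub M (ModuleCat.of Λ (Fin n → ULift Λ)) := absub_pow M hΛ n
  haveI : Module.Finite Λ (ULift Λ) := Module.Finite.equiv (ULift.moduleEquiv (R := Λ) (M := Λ)).symm
  have hker : abSub M (ModuleCat.of Λ (LinearMap.ker f')) :=
    absub_submodule k M hsimples hpow (LinearMap.ker f')
  have hq : abSub M (ModuleCat.of Λ ((Fin n → ULift Λ) ⧸ LinearMap.ker f')) :=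
    absub_quot M (LinearMap.ker f') hpow hker
  have hX2 := absub_congr M (f'.quotKerEquivOfSurjective hf') hq
  exact (absub_isExact M).iso (Iso.refl X : ModuleCat.of Λ X ≅ X) hX2


end Stmt10
end

section
/- Every indecomposable module over a Nakayama algebra is ab-projective: if Λ is a finite-dimensional Nakayama algebra with radical J, and M is an indecomposable Λ-module of length t, then M is a projective Λ/J^t-module, hence projective in ab(M). -/
open CategoryTheory Limits

section Stmt16
open CategoryTheory Limits

/-- `J(Λ)^t`, the `t`-th power of the Jacobson radical, as a left ideal. -/
noncomputable def radPow (Λ : Type) [Ring Λ] (t : ℕ) : Ideal Λ :=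
  (fun S : Submodule Λ Λ => (Ideal.jacobson (⊥ : Ideal Λ)) • S)^[t] ⊤

section ModLemmas
variable {Λ : Type} [Ring Λ]

example (R M : Type) [Ring R] [AddCommGroup M] [Module R M] [IsSimpleModule R M] :
    IsSemisimpleModule R M := inferInstance

theorem radPow_zero : radPow Λ 0 = ⊤ := rfl

theorem radPow_succ (i : ℕ) :
    radPow Λ (i+1) = (Ideal.jacobson (⊥ : Ideal Λ)) • radPow Λ i := by
  unfold radPow
  rw [Function.iterate_succ_apply']

/-- The Jacobson radical kills every simple module. -/
theorem jac_smul_simple {S : Type*} [AddCommGroup S] [Module Λ S] [IsSimpleModule Λ S]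
    {r : Λ} (hr : r ∈ Ideal.jacobson (⊥ : Ideal Λ)) (x : S) : r • x = 0 := by
  by_cases hx : x = 0
  · simp [hx]
  · have hmax := IsSimpleModule.ker_toSpanSingleton_isMaximal Λ hx
    have hle : Ideal.jacobson (⊥ : Ideal Λ) ≤ LinearMap.ker (LinearMap.toSpanSingleton Λ S x) :=
      sInf_le ⟨bot_le, hmax⟩
    have := hle hr
    rwa [LinearMap.mem_ker, LinearMap.toSpanSingleton_apply] at this

/-- If `A ⋖ B` then the Jacobson radical maps `B` into `A`. -/
theorem jac_smul_cover {N : Type*} [AddCommGroup N] [Module Λ N] {A B : Submodule Λ N}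
    (h : A ⋖ B) {r : Λ} (hr : r ∈ Ideal.jacobson (⊥ : Ideal Λ)) {b : N} (hb : b ∈ B) :
    r • b ∈ A := by
  haveI hs : IsSimpleModule Λ (↥B ⧸ Submodule.comap B.subtype A) :=
    (covBy_iff_quot_is_simple h.le).1 h
  have h0 : r • (Submodule.Quotient.mk (⟨b, hb⟩ : B) :
      ↥B ⧸ Submodule.comap B.subtype A) = 0 := jac_smul_simple hr _
  rw [← Submodule.Quotient.mk_smul, Submodule.Quotient.mk_eq_zero] at h0
  exact h0

theorem jac_smul_cover_le {N : Type*} [AddCommGroup N] [Module Λ N] {A B : Submodule Λ N}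
    (h : A ⋖ B) : (Ideal.jacobson (⊥ : Ideal Λ)) • B ≤ A :=
  Submodule.smul_le.2 fun r hr b hb => jac_smul_cover h hr hb

theorem radPow_smul_succ {N : Type*} [AddCommGroup N] [Module Λ N] (i : ℕ)
    (T : Submodule Λ N) :
    radPow Λ (i+1) • T = (Ideal.jacobson (⊥ : Ideal Λ)) • (radPow Λ i • T) := by
  rw [radPow_succ, Submodule.smul_assoc]

/-- A module with a composition series of length `t` going from `⊥` to `⊤` is
annihilated by the `t`-th power of the radical. -/
theorem radPow_smul_eq_bot_of_compositionSeries {N : Type*} [AddCommGroup N] [Module Λ N]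
    (s : CompositionSeries (Submodule Λ N)) (hh : s.head = ⊥) (hl : s.last = ⊤) :
    radPow Λ s.length • (⊤ : Submodule Λ N) = ⊥ := by
  have key : ∀ i : ℕ, ∀ hi : i ≤ s.length,
      radPow Λ i • (⊤ : Submodule Λ N) ≤ s.toFun ⟨s.length - i, by omega⟩ := by
    intro i
    induction i with
    | zero =>
      intro hi
      rw [radPow_zero, Submodule.top_smul]
      have : (⟨s.length - 0, by omega⟩ : Fin (s.length + 1)) = Fin.last s.length := by
        simp [Fin.ext_iff]
      rw [this]
      exact le_of_eq hl.symm
    | succ i ih =>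
      intro hi
      have hi' : i ≤ s.length := by omega
      have hcov := s.step ⟨s.length - (i+1), by omega⟩
      have hsucc : (⟨s.length - (i+1), by omega⟩ : Fin s.length).succ
          = (⟨s.length - i, by omega⟩ : Fin (s.length + 1)) := by
        simp [Fin.ext_iff]; omega
      rw [hsucc] at hcov
      calc radPow Λ (i+1) • (⊤ : Submodule Λ N)
          = (Ideal.jacobson (⊥ : Ideal Λ)) • (radPow Λ i • ⊤) := radPow_smul_succ i ⊤
        _ ≤ (Ideal.jacobson (⊥ : Ideal Λ)) • s.toFun ⟨s.length - i, by omega⟩ :=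
            smul_mono_right _ (ih hi')
        _ ≤ s.toFun (Fin.castSucc ⟨s.length - (i+1), by omega⟩) := jac_smul_cover_le hcov
        _ = s.toFun ⟨s.length - (i+1), by omega⟩ := by congr 1
  have := key s.length le_rfl
  have h0 : (⟨s.length - s.length, by omega⟩ : Fin (s.length + 1)) = 0 := by
    simp [Fin.ext_iff]
  rw [h0] at this
  have : radPow Λ s.length • (⊤ : Submodule Λ N) ≤ ⊥ := by
    rw [← hh]; exact this
  exact le_bot_iff.1 this

theorem jac_mul_mem {r : Λ} (hr : r ∈ Ideal.jacobson (⊥ : Ideal Λ)) (a : Λ) :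
    r * a ∈ Ideal.jacobson (⊥ : Ideal Λ) := by
  rw [Ideal.jacobson, Submodule.mem_sInf]
  rintro m ⟨-, hm⟩
  haveI : IsSimpleModule Λ (Λ ⧸ m) := isSimpleModule_iff_isCoatom.2 hm.out
  have h0 : r • (Submodule.Quotient.mk a : Λ ⧸ m) = 0 := jac_smul_simple hr _
  rw [← Submodule.Quotient.mk_smul, Submodule.Quotient.mk_eq_zero] at h0
  exact h0

theorem radPow_mul_mem {t : ℕ} {x : Λ} (hx : x ∈ radPow Λ t) (a : Λ) :
    x * a ∈ radPow Λ t := by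
  induction t generalizing x with
  | zero => exact Submodule.mem_top
  | succ i ih =>
    rw [radPow_succ] at hx ⊢
    refine Submodule.smul_induction_on hx (fun r hr y hy => ?_) (fun y z hy hz => ?_)
    · have : r • y • a = r • (y * a) := by simp [smul_eq_mul, mul_assoc]
      have h2 : (r • y) * a = r • (y * a) := by simp [smul_eq_mul, mul_assoc]
      rw [h2]
      exact Submodule.smul_mem_smul hr (ih hy)
    · rw [add_mul]; exact Submodule.add_mem _ hy hz

section Semisimple

theorem subsingleton_isSemisimpleModule {X : Type*} [AddCommGroup X] [Module Λ X]
    [Subsingleton X] : IsSemisimpleModule Λ X := by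
  have hall : ∀ a : Submodule Λ X, a = ⊥ := fun a =>
    eq_bot_iff.2 fun x _ => by simp [Subsingleton.elim x 0]
  refine { exists_isCompl := ?_ }
  intro a
  exact ⟨⊤, by rw [hall a]; exact isCompl_bot_top⟩

theorem prod_isSemisimpleModule {A B : Type*} [AddCommGroup A] [Module Λ A]
    [AddCommGroup B] [Module Λ B] [IsSemisimpleModule Λ A] [IsSemisimpleModule Λ B] :
    IsSemisimpleModule Λ (A × B) := by
  apply isSemisimpleModule_of_isSemisimpleModule_submodule'
    (p := fun b : Bool => if b then Submodule.fst Λ A B else Submodule.snd Λ A B)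
  · intro i
    cases i
    · simpa using IsSemisimpleModule.congr (Submodule.sndEquiv Λ A B)
    · simpa using IsSemisimpleModule.congr (Submodule.fstEquiv Λ A B)
  · rw [iSup_bool_eq]
    simpa using Submodule.fst_sup_snd Λ A B

theorem quot_inf_isSemisimpleModule (I I' : Ideal Λ)
    (h : IsSemisimpleModule Λ (Λ ⧸ I)) (h' : IsSemisimpleModule Λ (Λ ⧸ I')) :
    IsSemisimpleModule Λ (Λ ⧸ (I ⊓ I')) := by
  have hker : I ⊓ I' ≤ LinearMap.ker (LinearMap.prod I.mkQ I'.mkQ) := by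
    rw [LinearMap.ker_prod, Submodule.ker_mkQ, Submodule.ker_mkQ]
  set q := (I ⊓ I').liftQ (LinearMap.prod I.mkQ I'.mkQ) hker with hq
  have hinj : Function.Injective q := by
    rw [← LinearMap.ker_eq_bot]
    apply Submodule.ker_liftQ_eq_bot
    rw [LinearMap.ker_prod, Submodule.ker_mkQ, Submodule.ker_mkQ]
  haveI : IsSemisimpleModule Λ ((Λ ⧸ I) × (Λ ⧸ I')) := prod_isSemisimpleModule
  exact IsSemisimpleModule.congr (LinearEquiv.ofInjective q hinj)

theorem jac_quotient_isSemisimpleModule [IsArtinian Λ Λ] :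
    IsSemisimpleModule Λ (Λ ⧸ Ideal.jacobson (⊥ : Ideal Λ)) := by
  classical
  -- J is a finite intersection of maximal left ideals
  obtain ⟨I₀, ⟨s, hs, rfl⟩, hmin⟩ := IsArtinian.set_has_minimal
    {I : Ideal Λ | ∃ s : Finset (Ideal Λ), (∀ m ∈ s, m.IsMaximal) ∧ I = s.inf id}
    ⟨⊤, ∅, by simp, by simp⟩
  have hJ : Ideal.jacobson (⊥ : Ideal Λ) = s.inf id := by
    apply le_antisymm
    · exact Finset.le_inf fun m hm => sInf_le ⟨bot_le, hs m hm⟩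
    · apply le_sInf
      rintro m ⟨-, hm⟩
      by_contra hns
      have hlt : s.inf id ⊓ m < s.inf id := by
        refine lt_of_le_of_ne inf_le_left fun he => hns ?_
        rw [← he]; exact inf_le_right
      exact hmin _ ⟨insert m s, fun x hx => by
        rcases Finset.mem_insert.1 hx with rfl | hx
        · exact hm
        · exact hs x hx, by rw [Finset.inf_insert, inf_comm]; rfl⟩ hlt
  have claim : ∀ s : Finset (Ideal Λ), (∀ m ∈ s, m.IsMaximal) →
      IsSemisimpleModule Λ (Λ ⧸ (s.inf id : Ideal Λ)) := by
    intro s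
    induction s using Finset.induction_on with
    | empty =>
      intro _
      haveI : Subsingleton (Λ ⧸ ((∅ : Finset (Ideal Λ)).inf id : Ideal Λ)) := by
        rw [Submodule.Quotient.subsingleton_iff]; simp
      exact subsingleton_isSemisimpleModule
    | @insert a s' ha ih =>
      intro hmax
      rw [Finset.inf_insert]
      haveI : IsSimpleModule Λ (Λ ⧸ (id a : Ideal Λ)) :=
        isSimpleModule_iff_isCoatom.2 (hmax a (Finset.mem_insert_self a s')).out
      exact quot_inf_isSemisimpleModule _ _ inferInstance
        (ih fun m hm => hmax m (Finset.mem_insert_of_mem hm))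
  rw [hJ]
  exact claim s hs

/-- A finitely generated module annihilated by the Jacobson radical is semisimple. -/
theorem isSemisimpleModule_of_jac_ann {X : Type*} [AddCommGroup X] [Module Λ X]
    [Module.Finite Λ X] [IsArtinian Λ Λ]
    (hX : ∀ r ∈ Ideal.jacobson (⊥ : Ideal Λ), ∀ x : X, r • x = 0) :
    IsSemisimpleModule Λ X := by
  obtain ⟨S, hS⟩ : ∃ S : Finset X, Submodule.span Λ (S : Set X) = ⊤ := Module.Finite.fg_top (R := Λ)
  apply isSemisimpleModule_of_isSemisimpleModule_submodule'
    (ι := {x : X // x ∈ S}) (p := fun y => Submodule.span Λ {y.1})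
  · intro y
    set f := LinearMap.toSpanSingleton Λ X y.1 with hf
    have hJker : Ideal.jacobson (⊥ : Ideal Λ) ≤ LinearMap.ker f := fun r hr => by
      rw [LinearMap.mem_ker, hf, LinearMap.toSpanSingleton_apply]
      exact hX r hr y.1
    haveI := jac_quotient_isSemisimpleModule (Λ := Λ)
    haveI : IsSemisimpleModule Λ
        ((Λ ⧸ Ideal.jacobson (⊥ : Ideal Λ)) ⧸
          Submodule.map (Ideal.jacobson (⊥ : Ideal Λ)).mkQ (LinearMap.ker f)) :=
      IsSemisimpleModule.quotient
    have e2 := Submodule.quotientQuotientEquivQuotient _ _ hJker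
    haveI : IsSemisimpleModule Λ (Λ ⧸ LinearMap.ker f) := IsSemisimpleModule.congr e2.symm
    haveI : IsSemisimpleModule Λ (LinearMap.range f) :=
      IsSemisimpleModule.congr f.quotKerEquivRange.symm
    exact IsSemisimpleModule.congr
      (LinearEquiv.ofEq _ _ (LinearMap.span_singleton_eq_range Λ X y.1))
  · apply le_antisymm le_top
    rw [← hS]
    rw [Submodule.span_le]
    intro x hx
    have : Submodule.span Λ {x} ≤ ⨆ y : {x : X // x ∈ S}, Submodule.span Λ {y.1} :=
      le_iSup (fun y : {x : X // x ∈ S} => Submodule.span Λ {y.1}) ⟨x, hx⟩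
    exact this (Submodule.mem_span_singleton_self x)

end Semisimple

section Serial

/-- In a semisimple serial module, every submodule is `⊥` or `⊤`. -/
theorem serial_semisimple_bot_or_top {X : Type*} [AddCommGroup X] [Module Λ X]
    (hser : ∀ U V : Submodule Λ X, U ≤ V ∨ V ≤ U) [IsSemisimpleModule Λ X]
    (U : Submodule Λ X) : U = ⊥ ∨ U = ⊤ := by
  obtain ⟨V, hV⟩ := exists_isCompl U
  rcases hser U V with h | h
  · left
    have : U ≤ U ⊓ V := le_inf le_rfl h
    rw [hV.inf_eq_bot] at this
    exact le_bot_iff.1 this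
  · right
    have : U ⊔ V ≤ U := sup_le le_rfl h
    rw [hV.sup_eq_top] at this
    exact top_le_iff.1 this

/-- In a serial finite-length module, between `J • W` and `W` there is nothing. -/
theorem serial_gap {N : Type} [AddCommGroup N] [Module Λ N] [IsArtinian Λ Λ]
    [IsNoetherian Λ N] (hser : ∀ U V : Submodule Λ N, U ≤ V ∨ V ≤ U)
    {W U : Submodule Λ N} (h1 : (Ideal.jacobson (⊥ : Ideal Λ)) • W ≤ U) (h2 : U ≤ W) :
    U = (Ideal.jacobson (⊥ : Ideal Λ)) • W ∨ U = W := by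
  set J := Ideal.jacobson (⊥ : Ideal Λ) with hJdef
  set T : Submodule Λ W := J • ⊤ with hT
  haveI : Module.Finite Λ W := Module.Finite.iff_fg.2 (IsNoetherian.noetherian W)
  haveI : Module.Finite Λ (W ⧸ T) := Module.Finite.of_surjective T.mkQ T.mkQ_surjective
  have hannD : ∀ r ∈ J, ∀ d : (W ⧸ T), r • d = 0 := by
    intro r hr d
    obtain ⟨e, rfl⟩ := T.mkQ_surjective d
    rw [← map_smul, Submodule.mkQ_apply, Submodule.Quotient.mk_eq_zero]
    exact Submodule.smul_mem_smul hr Submodule.mem_top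
  haveI ssD : IsSemisimpleModule Λ (W ⧸ T) := isSemisimpleModule_of_jac_ann hannD
  -- the quotient is serial
  have hmapT : Submodule.map W.subtype T = J • W := by
    rw [hT, Submodule.map_smul'', Submodule.map_subtype_top]
  have hle_iff : ∀ U₁ U₂ : Submodule Λ (W ⧸ T),
      Submodule.map W.subtype (Submodule.comap T.mkQ U₁)
        ≤ Submodule.map W.subtype (Submodule.comap T.mkQ U₂) ↔ U₁ ≤ U₂ := by
    intro U₁ U₂
    rw [Submodule.map_le_map_iff_of_injective (Submodule.injective_subtype W)]
    constructor
    · intro h x hx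
      obtain ⟨e, rfl⟩ := T.mkQ_surjective x
      exact h hx
    · intro h x hx
      exact h hx
  have hserD : ∀ U₁ U₂ : Submodule Λ (W ⧸ T), U₁ ≤ U₂ ∨ U₂ ≤ U₁ := by
    intro U₁ U₂
    rcases hser (Submodule.map W.subtype (Submodule.comap T.mkQ U₁))
      (Submodule.map W.subtype (Submodule.comap T.mkQ U₂)) with h | h
    · exact Or.inl ((hle_iff _ _).1 h)
    · exact Or.inr ((hle_iff _ _).1 h)
  -- translate U
  set Ub : Submodule Λ (W ⧸ T) := Submodule.map T.mkQ (Submodule.comap W.subtype U) with hUb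
  rcases serial_semisimple_bot_or_top hserD Ub with h | h
  · left
    have hsub : Submodule.comap W.subtype U ≤ T := by
      intro x hx
      have : T.mkQ x ∈ Ub := Submodule.mem_map_of_mem hx
      rw [h] at this
      have h0 : T.mkQ x = 0 := this
      rwa [Submodule.mkQ_apply, Submodule.Quotient.mk_eq_zero] at h0
    have := Submodule.map_mono (f := W.subtype) hsub
    rw [Submodule.map_comap_subtype, hmapT, inf_eq_right.2 h2] at this
    exact le_antisymm this h1
  · right
    have hTle : T ≤ Submodule.comap W.subtype U := by
      rw [← Submodule.map_le_iff_le_comap] at *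
      rw [hmapT]; exact h1
    have htop : Submodule.comap W.subtype U = ⊤ := by
      have := congrArg (Submodule.comap T.mkQ) h
      rw [hUb, Submodule.comap_map_mkQ, Submodule.comap_top, sup_eq_right.2 hTle] at this
      exact this
    have := congrArg (Submodule.map W.subtype) htop
    rw [Submodule.map_comap_subtype, inf_eq_right.2 h2, Submodule.map_subtype_top] at this
    exact this

/-- In a serial module annihilated by `J^t`, every submodule is of the form `J^i • ⊤`. -/
theorem serial_chain {N : Type} [AddCommGroup N] [Module Λ N] [IsArtinian Λ Λ]
    [IsNoetherian Λ N] (hser : ∀ U V : Submodule Λ N, U ≤ V ∨ V ≤ U) (t : ℕ)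
    (hann : radPow Λ t • (⊤ : Submodule Λ N) = ⊥) (U : Submodule Λ N) :
    ∃ i ≤ t, U = radPow Λ i • ⊤ := by
  have hex : ∃ i, i ≤ t ∧ radPow Λ i • (⊤ : Submodule Λ N) ≤ U :=
    ⟨t, le_rfl, by rw [hann]; exact bot_le⟩
  classical
  set i₀ := Nat.find hex with hi₀
  obtain ⟨hi₀t, hi₀le⟩ := Nat.find_spec hex
  cases hc : i₀ with
  | zero =>
    rw [hi₀] at hc
    rw [hc] at hi₀le
    refine ⟨0, Nat.zero_le t, ?_⟩
    rw [radPow_zero, Submodule.top_smul] at hi₀le ⊢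
    exact le_antisymm le_top hi₀le
  | succ j =>
    rw [hi₀] at hc
    rw [hc] at hi₀le hi₀t
    have hj : ¬ (j ≤ t ∧ radPow Λ j • (⊤ : Submodule Λ N) ≤ U) :=
      Nat.find_min hex (by omega : j < Nat.find hex)
    have hjle : ¬ radPow Λ j • (⊤ : Submodule Λ N) ≤ U := fun hcon => hj ⟨by omega, hcon⟩
    have hUle : U ≤ radPow Λ j • (⊤ : Submodule Λ N) := by
      rcases hser U (radPow Λ j • ⊤) with h | h
      · exact h
      · exact absurd h hjle
    have hJW : (Ideal.jacobson (⊥ : Ideal Λ)) • (radPow Λ j • (⊤ : Submodule Λ N)) ≤ U := by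
      rw [← radPow_smul_succ]
      exact hi₀le
    rcases serial_gap hser hJW hUle with h | h
    · exact ⟨j+1, by omega, by rw [h, radPow_smul_succ]⟩
    · exact absurd (le_of_eq h.symm) hjle

end Serial

section Split
variable (k : Type) [Field k] [Algebra k Λ] [FiniteDimensional k Λ]

theorem split_surjection
    (hNak : ∀ (X : Type) [AddCommGroup X] [Module Λ X], Module.Finite Λ X →
      (Nontrivial X ∧ ∀ e : Module.End Λ X, e ∘ₗ e = e → e = 0 ∨ e = LinearMap.id) →
      ∀ U V : Submodule Λ X, U ≤ V ∨ V ≤ U)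
    (M : Type) [AddCommGroup M] [Module Λ M] [Nontrivial M]
    (Um : Submodule Λ M) (hUm : ∀ V : Submodule Λ M, V ≠ ⊤ → V ≤ Um) (hUmne : Um ≠ ⊤)
    (t : ℕ) (c : Fin (t+1) → Submodule Λ M) (hc : StrictMono c) (hc0 : c 0 = ⊥) :
    ∀ (d : ℕ) (N : Type) [AddCommGroup N] [Module k N] [Module Λ N] [IsScalarTower k Λ N]
      [FiniteDimensional k N], Module.finrank k N ≤ d →
      radPow Λ t • (⊤ : Submodule Λ N) = ⊥ →
      ∀ π : N →ₗ[Λ] M, Function.Surjective π →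
      ∃ σ : M →ₗ[Λ] N, π ∘ₗ σ = LinearMap.id := by
  haveI : IsArtinian Λ Λ := isArtinian_of_tower k inferInstance
  intro d
  induction d with
  | zero =>
    intro N _ _ _ _ _ hrk _ π hsurj
    exfalso
    haveI : Subsingleton N := Module.finrank_zero_iff.1 (Nat.le_zero.1 hrk)
    obtain ⟨m₁, m₂, hm⟩ := exists_pair_ne M
    obtain ⟨a, rfl⟩ := hsurj m₁
    obtain ⟨b, rfl⟩ := hsurj m₂
    exact hm (by rw [Subsingleton.elim a b])
  | succ d IH =>
    intro N _ _ _ _ _ hrk hann π hsurj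
    by_cases hsub : Subsingleton N
    · exfalso
      obtain ⟨m₁, m₂, hm⟩ := exists_pair_ne M
      obtain ⟨a, rfl⟩ := hsurj m₁
      obtain ⟨b, rfl⟩ := hsurj m₂
      exact hm (by rw [Subsingleton.elim a b])
    haveI : Nontrivial N := not_subsingleton_iff_nontrivial.1 hsub
    haveI : IsNoetherian Λ N := isNoetherian_of_tower k inferInstance
    haveI : Module.Finite Λ N := inferInstance
    have hannN : ∀ r ∈ radPow Λ t, ∀ x : N, r • x = 0 := by
      intro r hr x
      have : r • x ∈ radPow Λ t • (⊤ : Submodule Λ N) :=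
        Submodule.smul_mem_smul hr Submodule.mem_top
      rw [hann] at this
      exact this
    by_cases hdec : ∃ e : Module.End Λ N, e ∘ₗ e = e ∧ e ≠ 0 ∧ e ≠ LinearMap.id
    · -- decomposable case
      obtain ⟨e, he, he0, heid⟩ := hdec
      have hee : ∀ x : N, e (e x) = e x := fun x => DFunLike.congr_fun he x
      have key : ∀ A : Submodule Λ N, A ≠ ⊤ → Submodule.map π A = ⊤ →
          ∃ σ : M →ₗ[Λ] N, π ∘ₗ σ = LinearMap.id := by
        intro A hA hmap
        haveI : FiniteDimensional k ↥(A.restrictScalars k) := inferInstance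
        have eA : ↥(A.restrictScalars k) ≃ₗ[k] ↥A :=
          (Submodule.restrictScalarsEquiv (S := k) (p := A)).restrictScalars k
        haveI : FiniteDimensional k ↥A := Module.Finite.equiv eA
        have hlt : Module.finrank k ↥A < Module.finrank k N := by
          rw [← eA.finrank_eq]
          refine Submodule.finrank_lt (fun hcon => hA ?_)
          apply Submodule.restrictScalars_injective k Λ N
          rw [hcon]; rfl
        have hannA : radPow Λ t • (⊤ : Submodule Λ ↥A) = ⊥ := by
          rw [eq_bot_iff]
          refine Submodule.smul_le.2 fun r hr a _ => ?_
          rw [Submodule.mem_bot]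
          apply Subtype.ext
          rw [Submodule.coe_smul]
          exact hannN r hr a.1
        have hsurjA : Function.Surjective (π ∘ₗ A.subtype) := by
          rw [← LinearMap.range_eq_top, LinearMap.range_comp, Submodule.range_subtype, hmap]
        obtain ⟨σ', hσ'⟩ := IH ↥A (by omega) hannA (π ∘ₗ A.subtype) hsurjA
        refine ⟨A.subtype ∘ₗ σ', ?_⟩
        rw [← LinearMap.comp_assoc, hσ']
      have hrk_ne : LinearMap.range e ≠ ⊤ := by
        intro hcon
        apply heid
        apply LinearMap.ext
        intro x
        obtain ⟨y, rfl⟩ := LinearMap.range_eq_top.1 hcon x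
        exact hee y
      have hker_ne : LinearMap.ker e ≠ ⊤ := fun hcon => he0 (LinearMap.ker_eq_top.1 hcon)
      have hsup : LinearMap.range e ⊔ LinearMap.ker e = ⊤ := by
        rw [eq_top_iff]
        intro x _
        refine Submodule.mem_sup.2 ⟨e x, LinearMap.mem_range_self e x, x - e x, ?_, ?_⟩
        · rw [LinearMap.mem_ker, map_sub, hee, sub_self]
        · exact add_sub_cancel (e x) x
      by_cases h1 : Submodule.map π (LinearMap.range e) = ⊤
      · exact key _ hrk_ne h1
      · have h2 : Submodule.map π (LinearMap.ker e) = ⊤ := by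
          by_contra h2
          apply hUmne
          rw [eq_top_iff]
          have : (⊤ : Submodule Λ M) = Submodule.map π (LinearMap.range e)
              ⊔ Submodule.map π (LinearMap.ker e) := by
            rw [← Submodule.map_sup, hsup, Submodule.map_top, LinearMap.range_eq_top.2 hsurj]
          rw [this]
          exact sup_le (hUm _ h1) (hUm _ h2)
        exact key _ hker_ne h2
    · -- indecomposable, hence serial
      have hser : ∀ U V : Submodule Λ N, U ≤ V ∨ V ≤ U := by
        apply hNak N inferInstance
        refine ⟨inferInstance, fun e he => ?_⟩
        by_contra hcon
        push_neg at hcon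
        exact hdec ⟨e, he, hcon.1, hcon.2⟩
      have hinj : Function.Injective π := by
        rw [← LinearMap.ker_eq_bot]
        by_contra hK
        have hcomap_inj : Function.Injective (Submodule.comap π) :=
          Submodule.comap_injective_of_surjective hsurj
        choose g hg1 hg2 using fun j : Fin (t+1) =>
          serial_chain hser t hann (Submodule.comap π (c j))
        have hgt : ∀ j, g j < t := by
          intro j
          rcases lt_or_eq_of_le (hg1 j) with h | h
          · exact h
          · exfalso
            apply hK
            have hbot : Submodule.comap π (c j) = ⊥ := by rw [hg2 j, h, hann]
            have : LinearMap.ker π ≤ Submodule.comap π (c j) := by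
              rw [← Submodule.comap_bot, ← hc0]
              exact Submodule.comap_mono (hc0 ▸ bot_le)
            rw [hbot] at this
            exact le_bot_iff.1 this
        have hFinj : Function.Injective (fun j : Fin (t+1) => (⟨g j, hgt j⟩ : Fin t)) := by
          intro a b hab
          simp only [Fin.mk.injEq] at hab
          apply hc.injective
          apply hcomap_inj
          rw [hg2 a, hg2 b, hab]
        have := Fintype.card_le_of_injective _ hFinj
        simp [Fintype.card_fin] at this
      have hbij : Function.Bijective π := ⟨hinj, hsurj⟩
      refine ⟨(LinearEquiv.ofBijective π hbij).symm.toLinearMap, ?_⟩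
      apply LinearMap.ext
      intro m
      exact (LinearEquiv.ofBijective π hbij).apply_symm_apply m

end Split

end ModLemmas

section Cat
open CategoryTheory Limits

/-- The predicate "annihilated by `radPow Λ t`" on `ModuleCat Λ`. -/
def AnnP (Λ : Type) [Ring Λ] (t : ℕ) (X : ModuleCat Λ) : Prop :=
  ∀ r ∈ radPow Λ t, ∀ x : X, r • x = 0

theorem annP_isExactAbelianSub (Λ : Type) [Ring Λ] (t : ℕ) :
    IsExactAbelianSub (C := ModuleCat Λ) (AnnP Λ t) where
  iso := by
    intro X Y e hX r hr y
    have hy : e.hom (e.inv y) = y := e.inv_hom_id_apply y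
    calc r • y = r • e.hom (e.inv y) := by rw [hy]
      _ = e.hom (r • e.inv y) := (map_smul e.hom.hom r _).symm
      _ = e.hom 0 := by rw [hX r hr]
      _ = 0 := map_zero _
  zero := by
    intro Z hZ r hr z
    have h1 : (𝟙 Z : Z ⟶ Z) = 0 := hZ.eq_of_src _ _
    have h2 : z = (0 : Z ⟶ Z) z := by rw [← h1]; rfl
    rw [h2]
    have h3 : (0 : Z ⟶ Z) z = 0 := rfl
    rw [h3, smul_zero]
  ker := by
    intro X Y f hX hY r hr x
    have hinj : Function.Injective (kernel.ι f) :=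
      (ModuleCat.mono_iff_injective (kernel.ι f)).1 inferInstance
    apply hinj
    rw [map_smul, map_zero]
    exact hX r hr _
  coker := by
    intro X Y f hX hY r hr x
    have hsurj : Function.Surjective (cokernel.π f) :=
      (ModuleCat.epi_iff_surjective (cokernel.π f)).1 inferInstance
    obtain ⟨y, rfl⟩ := hsurj x
    rw [← map_smul, hY r hr, map_zero]
  sum := by
    intro X Y hX hY r hr z
    have h := biprod.total (X := X) (Y := Y)
    have h2 : (biprod.fst ≫ biprod.inl + biprod.snd ≫ biprod.inr : X ⊞ Y ⟶ X ⊞ Y) z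
        = 𝟙 (X ⊞ Y) z := by rw [h]
    have hz : (biprod.inl : X ⟶ X ⊞ Y) ((biprod.fst : X ⊞ Y ⟶ X) z)
        + (biprod.inr : Y ⟶ X ⊞ Y) ((biprod.snd : X ⊞ Y ⟶ Y) z) = z := h2
    calc r • z = r • ((biprod.inl : X ⟶ X ⊞ Y) ((biprod.fst : X ⊞ Y ⟶ X) z)
          + (biprod.inr : Y ⟶ X ⊞ Y) ((biprod.snd : X ⊞ Y ⟶ Y) z)) := by rw [hz]
      _ = (biprod.inl : X ⟶ X ⊞ Y) (r • (biprod.fst : X ⊞ Y ⟶ X) z)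
          + (biprod.inr : Y ⟶ X ⊞ Y) (r • (biprod.snd : X ⊞ Y ⟶ Y) z) := by
            rw [smul_add, map_smul, map_smul]
      _ = 0 := by rw [hX r hr, hY r hr, map_zero, map_zero, add_zero]

theorem abProjective_of_split (Λ : Type) [Ring Λ] (t n : ℕ) (M : Type) [AddCommGroup M]
    [Module Λ M] (i : M →ₗ[Λ] (Fin n → (Λ ⧸ radPow Λ t)))
    (p : (Fin n → (Λ ⧸ radPow Λ t)) →ₗ[Λ] M) (hpi : p ∘ₗ i = LinearMap.id)
    (hann : ∀ r ∈ radPow Λ t, ∀ x : M, r • x = 0) :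
    AbProjective (ModuleCat.of Λ M) := by
  have hMann : AnnP Λ t (ModuleCat.of Λ M) := hann
  constructor
  · exact fun P _ h => h
  · intro X Y hX hY e he f
    have hesurj : Function.Surjective e := (ModuleCat.epi_iff_surjective e).1 he
    have hXann : AnnP Λ t X := hX _ (annP_isExactAbelianSub Λ t) hMann
    set h : (Fin n → (Λ ⧸ radPow Λ t)) →ₗ[Λ] Y := f.hom ∘ₗ p with hh
    choose xs hxs using fun j : Fin n =>
      hesurj (h (Pi.single j (Submodule.Quotient.mk (1 : Λ) : Λ ⧸ radPow Λ t)))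
    have hker : ∀ j : Fin n, radPow Λ t ≤
        LinearMap.ker (LinearMap.toSpanSingleton Λ X (xs j)) := by
      intro j r hr
      rw [LinearMap.mem_ker, LinearMap.toSpanSingleton_apply]
      exact hXann r hr (xs j)
    set φ : Fin n → (Λ ⧸ radPow Λ t) →ₗ[Λ] X := fun j =>
      (radPow Λ t).liftQ (LinearMap.toSpanSingleton Λ X (xs j)) (hker j) with hφ
    set g0 : (Fin n → (Λ ⧸ radPow Λ t)) →ₗ[Λ] X :=
      ∑ j, (φ j) ∘ₗ LinearMap.proj j with hg0def
    have hg0 : ∀ v, e (g0 v) = h v := by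
      intro v
      have h1 : g0 v = ∑ j, φ j (v j) := by
        rw [hg0def, LinearMap.sum_apply]
        rfl
      have hv : h v = ∑ j, h (Pi.single j (v j)) := by
        conv_lhs => rw [← Finset.univ_sum_single v]
        rw [map_sum]
      rw [h1, map_sum, hv]
      refine Finset.sum_congr rfl fun j _ => ?_
      obtain ⟨r, hr⟩ := Submodule.Quotient.mk_surjective _ (v j)
      rw [← hr]
      have h2 : φ j (Submodule.Quotient.mk r) = r • xs j := by
        rw [hφ]
        rw [Submodule.liftQ_apply, LinearMap.toSpanSingleton_apply]
      have h3 : (Pi.single j (Submodule.Quotient.mk r) : Fin n → Λ ⧸ radPow Λ t)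
          = r • (Pi.single j (Submodule.Quotient.mk (1 : Λ)) : Fin n → Λ ⧸ radPow Λ t) := by
        rw [← Pi.single_smul]
        congr 1
        rw [← Submodule.Quotient.mk_smul]
        congr 1
        rw [smul_eq_mul, mul_one]
      rw [h2, map_smul, hxs j, h3, map_smul]
    refine ⟨ModuleCat.ofHom (g0 ∘ₗ (i : M →ₗ[Λ] (Fin n → (Λ ⧸ radPow Λ t)))
      : (ModuleCat.of Λ M : ModuleCat Λ) →ₗ[Λ] X), ?_⟩
    apply ModuleCat.hom_ext
    apply LinearMap.ext
    intro m
    have : e (g0 (i m)) = h (i m) := hg0 (i m)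
    rw [hh] at this
    show e (g0 (i m)) = f m
    rw [this]
    show f (p (i m)) = f m
    rw [← LinearMap.comp_apply (f := p), hpi]
    rfl

end Cat

/-- Every indecomposable module over a Nakayama algebra is
ab-projective: if `Λ` is a finite-dimensional Nakayama algebra (every indecomposable
finite-dimensional module is serial, i.e. has linearly ordered submodule lattice) and
`M` is an indecomposable `Λ`-module of length `t`, then `J^t M = 0`, `M` is a
projective `Λ/J^t`-module (a direct summand of a finite free `Λ/J^t`-module), and `M`
is projective as an object of `ab M`. -/
theorem nakayama_indecomposable_abProjective
    (k : Type) [Field k] (Λ : Type) [Ring Λ] [Algebra k Λ] [FiniteDimensional k Λ]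
    (hNak : ∀ (X : Type) [AddCommGroup X] [Module Λ X], Module.Finite Λ X →
      (Nontrivial X ∧ ∀ e : Module.End Λ X, e ∘ₗ e = e → e = 0 ∨ e = LinearMap.id) →
      ∀ U V : Submodule Λ X, U ≤ V ∨ V ≤ U)
    (M : Type) [AddCommGroup M] [Module Λ M] [Module.Finite Λ M]
    (hMind : Nontrivial M ∧ ∀ e : Module.End Λ M, e ∘ₗ e = e → e = 0 ∨ e = LinearMap.id)
    (t : ℕ) (s : CompositionSeries (Submodule Λ M))
    (hhead : s.head = ⊥) (hlast : s.last = ⊤) (hlen : s.length = t) :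
    (radPow Λ t) • (⊤ : Submodule Λ M) = ⊥ ∧
    (∃ (n : ℕ) (i : M →ₗ[Λ] (Fin n → (Λ ⧸ radPow Λ t)))
        (p : (Fin n → (Λ ⧸ radPow Λ t)) →ₗ[Λ] M), p ∘ₗ i = LinearMap.id) ∧
    AbProjective (ModuleCat.of Λ M) := by
  subst hlen
  obtain ⟨hMnt, hMidem⟩ := hMind
  haveI : Nontrivial M := hMnt
  haveI : IsArtinian Λ Λ := isArtinian_of_tower k inferInstance
  have part1 : radPow Λ s.length • (⊤ : Submodule Λ M) = ⊥ :=
    radPow_smul_eq_bot_of_compositionSeries s hhead hlast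
  have hannM : ∀ r ∈ radPow Λ s.length, ∀ x : M, r • x = 0 := by
    intro r hr x
    have : r • x ∈ radPow Λ s.length • (⊤ : Submodule Λ M) :=
      Submodule.smul_mem_smul hr Submodule.mem_top
    rw [part1] at this
    exact this
  have hMser := hNak M inferInstance ⟨hMnt, hMidem⟩
  have hlpos : 0 < s.length := by
    by_contra h0
    push_neg at h0
    have h00 : s.length = 0 := by omega
    have h1 : s.head = s.last := by
      unfold RelSeries.head RelSeries.last
      congr 1
      simp [Fin.ext_iff, h00]
    rw [hhead, hlast] at h1
    exact absurd h1 bot_ne_top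
  have hcov := s.step ⟨s.length - 1, by omega⟩
  have hsucc_top : s.toFun (Fin.succ ⟨s.length - 1, by omega⟩) = ⊤ := by
    have he : (Fin.succ (⟨s.length - 1, by omega⟩ : Fin s.length)) = Fin.last s.length := by
      simp [Fin.ext_iff]
      omega
    rw [he]
    exact hlast
  set Um := s.toFun (Fin.castSucc ⟨s.length - 1, by omega⟩) with hUmdef
  have hUmtop : Um ⋖ ⊤ := by
    rw [← hsucc_top]
    exact hcov
  have hUmne : Um ≠ ⊤ := hUmtop.lt.ne
  have hUm : ∀ V : Submodule Λ M, V ≠ ⊤ → V ≤ Um := by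
    intro V hV
    rcases hMser V Um with h | h
    · exact h
    · rcases hUmtop.eq_or_eq h le_top with h1 | h1
      · exact le_of_eq h1
      · exact absurd h1 hV
  obtain ⟨x, hx⟩ : ∃ x : M, x ∉ Um := by
    by_contra hcon
    push_neg at hcon
    exact hUmne (Submodule.eq_top_iff'.2 hcon)
  set f₀ := LinearMap.toSpanSingleton Λ M x with hf₀
  have hrange : LinearMap.range f₀ = ⊤ := by
    by_contra hcon
    apply hx
    apply hUm _ hcon
    rw [hf₀, ← LinearMap.span_singleton_eq_range]
    exact Submodule.mem_span_singleton_self x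
  have hker : radPow Λ s.length ≤ LinearMap.ker f₀ := by
    intro r hr
    rw [LinearMap.mem_ker, hf₀, LinearMap.toSpanSingleton_apply]
    exact hannM r hr x
  set π : (Λ ⧸ radPow Λ s.length) →ₗ[Λ] M := (radPow Λ s.length).liftQ f₀ hker with hπ
  have hπsurj : Function.Surjective π := by
    intro m
    obtain ⟨a, ha⟩ := LinearMap.range_eq_top.1 hrange m
    exact ⟨Submodule.Quotient.mk a, by rw [hπ, Submodule.liftQ_apply]; exact ha⟩
  haveI : FiniteDimensional k (Λ ⧸ radPow Λ s.length) :=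
    Module.Finite.of_surjective ((radPow Λ s.length).mkQ.restrictScalars k)
      (radPow Λ s.length).mkQ_surjective
  have hannQ : radPow Λ s.length • (⊤ : Submodule Λ (Λ ⧸ radPow Λ s.length)) = ⊥ := by
    rw [eq_bot_iff]
    refine Submodule.smul_le.2 fun r hr y _ => ?_
    obtain ⟨a, rfl⟩ := Submodule.Quotient.mk_surjective _ y
    rw [Submodule.mem_bot, ← Submodule.Quotient.mk_smul, Submodule.Quotient.mk_eq_zero,
      smul_eq_mul]
    exact radPow_mul_mem hr a
  have hc0 : s.toFun 0 = ⊥ := hhead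
  obtain ⟨σ, hσ⟩ := split_surjection k hNak M Um hUm hUmne s.length s.toFun s.strictMono hc0
    (Module.finrank k (Λ ⧸ radPow Λ s.length)) (Λ ⧸ radPow Λ s.length) le_rfl hannQ π hπsurj
  have hpi : (π ∘ₗ LinearMap.proj (0 : Fin 1)) ∘ₗ LinearMap.pi (fun _ : Fin 1 => σ)
      = LinearMap.id := by
    rw [LinearMap.comp_assoc, LinearMap.proj_pi]
    exact hσ
  exact ⟨part1, ⟨1, LinearMap.pi (fun _ : Fin 1 => σ), π ∘ₗ LinearMap.proj (0 : Fin 1), hpi⟩,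
    abProjective_of_split Λ s.length 1 M (LinearMap.pi (fun _ : Fin 1 => σ))
      (π ∘ₗ LinearMap.proj (0 : Fin 1)) hpi hannM⟩

end Stmt16
end
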